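/- arXiv:2307.01340 — 3 statements merged into one kernel-verified Lean document; each statement's English description precedes it below -/
import Mathlib

section
/- (Identity (A2) of the paper.) Let s ∈ {1,…,N}. For every (λ, μ, c) ∈ Ω × ℝⁿ × ℝᴺ, every r ∈ {1,…,n} and every p ∈ {1,…,n}: (∂h_r^{(s)}/∂μ_p)( M_{0→s}(λ, μ, c) ) = (∂h_r/∂μ_p)(λ, μ, c). -/
open Finset Function

noncomputable section

/-- Evaluation of a Laurent polynomial `p ∈ ℝ[λ,λ⁻¹]` at a real number `x`
(meaningful for `x ≠ 0`, using `zpow`). -/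
def leval (p : LaurentPolynomial ℝ) (x : ℝ) : ℝ :=
  Finsupp.sum p.coeff fun k a => a * x ^ k

/-- The open set `Ω ⊂ ℝⁿ` of tuples with nonzero, pairwise distinct entries. -/
def Omega (n : ℕ) : Set (Fin n → ℝ) :=
  {lam | (∀ i, lam i ≠ 0) ∧ Function.Injective lam}

/-- `H` is the family of curve-`s` Stäckel Hamiltonians: it satisfies, at every point of
`Ω × ℝⁿ × ℝᴺ`, the curve-`s` separation relations
`σ(λᵢ)λᵢ⁻ˢ + Σ_{k=s+1}^{N} c_k λᵢ^{n+k-s-1} + Σ_{q=1}^{n} h_q λᵢ^{n-q}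
  + Σ_{k=1}^{s} c_k λᵢ^{k-s-1} = f(λᵢ) λᵢˢ μᵢ²`.
Here everything is 0-based: `H lam mu c q` is `h_{q+1}`, `c j` is `c_{j+1}`,
`lam i` is `λ_{i+1}`.  (These relations determine `H` uniquely on `Ω × ℝⁿ × ℝᴺ`,
by invertibility of the Vandermonde matrix.) -/
def SepSol (n N : ℕ) (f σ : LaurentPolynomial ℝ) (s : ℕ)
    (H : (Fin n → ℝ) → (Fin n → ℝ) → (Fin N → ℝ) → Fin n → ℝ) : Prop :=
  ∀ lam ∈ Omega n, ∀ (mu : Fin n → ℝ) (c : Fin N → ℝ), ∀ i : Fin n,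
    leval σ (lam i) * lam i ^ (-(s : ℤ))
      + (∑ j : Fin N,
          if s ≤ (j : ℕ) then c j * lam i ^ ((n : ℤ) + (j : ℕ) - (s : ℕ))
          else c j * lam i ^ (((j : ℕ) : ℤ) - (s : ℕ)))
      + (∑ q : Fin n, H lam mu c q * lam i ^ ((n : ℤ) - 1 - (q : ℕ)))
      = leval f (lam i) * lam i ^ (s : ℤ) * mu i ^ 2

/-- Partial derivative `∂h_r/∂λ_p`. -/
def pLam {n N : ℕ} (H : (Fin n → ℝ) → (Fin n → ℝ) → (Fin N → ℝ) → Fin n → ℝ)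
    (lam mu : Fin n → ℝ) (c : Fin N → ℝ) (r p : Fin n) : ℝ :=
  deriv (fun t => H (Function.update lam p t) mu c r) (lam p)

/-- Partial derivative `∂h_r/∂μ_p`. -/
def pMu {n N : ℕ} (H : (Fin n → ℝ) → (Fin n → ℝ) → (Fin N → ℝ) → Fin n → ℝ)
    (lam mu : Fin n → ℝ) (c : Fin N → ℝ) (r p : Fin n) : ℝ :=
  deriv (fun t => H lam (Function.update mu p t) c r) (mu p)

/-- The extended phase space `ℝⁿ × ℝⁿ × ℝᴺ` (coordinates `(λ, μ, c)`). -/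
abbrev PhaseP (n N : ℕ) := (Fin n → ℝ) × (Fin n → ℝ) × (Fin N → ℝ)

/-- The Miura map `M_{r→s}` on the extended phase space (for `r ≤ s ≤ N ≤ n`), built from
the curve-`r` Hamiltonians `Hr`:  `λ̄ᵢ = λᵢ`, `μ̄ᵢ = λᵢ^{r-s} μᵢ`,
`c̄ᵢ = h^{(r)}_{n+r-i+1}` for `i = r+1,…,s` and `c̄ᵢ = cᵢ` otherwise (1-based indexing;
internally 0-based).  For `r = 0` this is `M_{0→s}`, and `M_{0→0}` is the identity. -/
def Mrs (n N : ℕ) (hn : 1 ≤ n) (r s : ℕ)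
    (Hr : (Fin n → ℝ) → (Fin n → ℝ) → (Fin N → ℝ) → Fin n → ℝ)
    (x : PhaseP n N) : PhaseP n N :=
  (x.1, fun i => x.1 i ^ ((r : ℤ) - (s : ℕ)) * x.2.1 i,
    fun j : Fin N =>
      if h : r ≤ (j : ℕ) ∧ (j : ℕ) < s then
        Hr x.1 x.2.1 x.2.2 ⟨n + r - (j : ℕ) - 1, by obtain ⟨h1, h2⟩ := h; omega⟩
      else x.2.2 j)

/-- Auxiliary: explicit formula for `∂h_r/∂μ_p` coming from the separation relations. -/
theorem pMu_formula (n N : ℕ) (f σ : LaurentPolynomial ℝ) (s : ℕ)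
    (H : (Fin n → ℝ) → (Fin n → ℝ) → (Fin N → ℝ) → Fin n → ℝ)
    (hH : SepSol n N f σ s H)
    (lam : Fin n → ℝ) (hlam : lam ∈ Omega n) (mu : Fin n → ℝ) (c : Fin N → ℝ)
    (r p : Fin n) :
    pMu H lam mu c r p =
      2 * (Matrix.of fun i q : Fin n => lam i ^ ((n : ℤ) - 1 - (q : ℕ)))⁻¹ r p
        * (leval f (lam p) * lam p ^ (s : ℤ)) * mu p := by
  set V : Matrix (Fin n) (Fin n) ℝ :=
    Matrix.of fun i q : Fin n => lam i ^ ((n : ℤ) - 1 - (q : ℕ)) with hVdef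
  -- the matrix V is the column-reversed Vandermonde matrix, hence invertible
  have hVvand : V = (Matrix.vandermonde lam).submatrix id Fin.revPerm := by
    ext i q
    have hq : (n : ℤ) - 1 - (q : ℕ) = ((n - 1 - (q : ℕ) : ℕ) : ℤ) := by
      have := q.isLt; omega
    have hrev : ((Fin.revPerm q : Fin n) : ℕ) = n - 1 - (q : ℕ) := by
      simp only [Fin.revPerm_apply, Fin.val_rev]
      omega
    simp only [hVdef, Matrix.of_apply, hq, zpow_natCast, Matrix.submatrix_apply, id,
      Matrix.vandermonde, hrev]
  have hdet : IsUnit V.det := by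
    rw [hVvand, Matrix.det_permute']
    have h1 : (Matrix.vandermonde lam).det ≠ 0 :=
      Matrix.det_vandermonde_ne_zero_iff.mpr hlam.2
    have h2 : ((Equiv.Perm.sign (Fin.revPerm : Equiv.Perm (Fin n)) : ℤ) : ℝ) ≠ 0 := by
      rcases Int.isUnit_iff.mp (Equiv.Perm.sign (Fin.revPerm : Equiv.Perm (Fin n))).isUnit
        with h | h <;> simp [h]
    exact (mul_ne_zero h2 h1).isUnit
  -- the constant (in μ) part of the separation relations
  set K : Fin n → ℝ := fun i =>
    leval σ (lam i) * lam i ^ (-(s : ℤ))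
      + (∑ j : Fin N,
          if s ≤ (j : ℕ) then c j * lam i ^ ((n : ℤ) + (j : ℕ) - (s : ℕ))
          else c j * lam i ^ (((j : ℕ) : ℤ) - (s : ℕ))) with hKdef
  set F : Fin n → ℝ := fun i => leval f (lam i) * lam i ^ (s : ℤ) with hFdef
  -- V *ᵥ H = b where b i = F i * μ i ^ 2 - K i
  have hVb : ∀ mu' : Fin n → ℝ,
      V.mulVec (H lam mu' c) = fun i => F i * mu' i ^ 2 - K i := by
    intro mu'
    funext i
    have := hH lam hlam mu' c i
    simp only [Matrix.mulVec, dotProduct, hVdef, Matrix.of_apply, hKdef, hFdef]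
    have hsum : ∑ q : Fin n, lam i ^ ((n : ℤ) - 1 - (q : ℕ)) * H lam mu' c q
        = ∑ q : Fin n, H lam mu' c q * lam i ^ ((n : ℤ) - 1 - (q : ℕ)) := by
      exact Finset.sum_congr rfl fun q _ => mul_comm _ _
    rw [hsum]
    linarith [this]
  have hHeq : ∀ mu' : Fin n → ℝ,
      H lam mu' c = V⁻¹.mulVec (fun i => F i * mu' i ^ 2 - K i) := by
    intro mu'
    rw [← hVb mu', Matrix.mulVec_mulVec, Matrix.nonsing_inv_mul V hdet,
      Matrix.one_mulVec]
  -- compute the derivative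
  have hfun : (fun t => H lam (Function.update mu p t) c r)
      = fun t => ∑ i : Fin n,
          V⁻¹ r i * (F i * (Function.update mu p t i) ^ 2 - K i) := by
    funext t
    rw [hHeq (Function.update mu p t)]
    rfl
  have hder : HasDerivAt
      (fun t => ∑ i : Fin n,
          V⁻¹ r i * (F i * (Function.update mu p t i) ^ 2 - K i))
      (∑ i : Fin n, if i = p then V⁻¹ r p * (F p * (2 * mu p)) else 0) (mu p) := by
    apply HasDerivAt.fun_sum
    intro i _
    by_cases hip : i = p
    · subst hip
      simp only [if_pos rfl]
      have h1 : HasDerivAt (fun t : ℝ => t ^ 2) (2 * mu i ^ 1) (mu i) :=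
        by simpa using hasDerivAt_pow 2 (mu i)
      have h2 : HasDerivAt (fun t : ℝ => V⁻¹ r i * (F i * t ^ 2 - K i))
          (V⁻¹ r i * (F i * (2 * mu i ^ 1))) (mu i) :=
        ((h1.const_mul (F i)).sub_const (K i)).const_mul _
      have h3 : (fun t : ℝ => V⁻¹ r i * (F i * t ^ 2 - K i))
          = fun t => V⁻¹ r i * (F i * (Function.update mu i t i) ^ 2 - K i) := by
        funext t; rw [Function.update_self]
      rw [h3] at h2
      simpa using h2
    · simp only [if_neg hip]
      have : (fun t => V⁻¹ r i * (F i * (Function.update mu p t i) ^ 2 - K i))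
          = fun _ : ℝ => V⁻¹ r i * (F i * (mu i) ^ 2 - K i) := by
        funext t; rw [Function.update_of_ne hip]
      rw [this]
      exact hasDerivAt_const _ _
  have hsum : (∑ i : Fin n, if i = p then V⁻¹ r p * (F p * (2 * mu p)) else 0)
      = V⁻¹ r p * (F p * (2 * mu p)) := by
    rw [Finset.sum_ite_eq' Finset.univ p (fun _ => V⁻¹ r p * (F p * (2 * mu p)))]
    simp
  unfold pMu
  rw [hfun, hder.deriv, hsum, hFdef]
  ring

/-- identity (A2) of the paper: for `s ∈ {1,…,N}`,
`(∂h_r^{(s)}/∂μ_p)(M_{0→s}(λ, μ, c)) = (∂h_r/∂μ_p)(λ, μ, c)` on `Ω × ℝⁿ × ℝᴺ`. -/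

theorem identity_A2
    (n N : ℕ) (hn : 1 ≤ n) (hN1 : 1 ≤ N) (hNn : N ≤ n)
    (f σ : LaurentPolynomial ℝ) (s : ℕ) (hs1 : 1 ≤ s) (hsN : s ≤ N)
    (H0 Hs : (Fin n → ℝ) → (Fin n → ℝ) → (Fin N → ℝ) → Fin n → ℝ)
    (hH0 : SepSol n N f σ 0 H0) (hHs : SepSol n N f σ s Hs)
    (lam : Fin n → ℝ) (hlam : lam ∈ Omega n) (mu : Fin n → ℝ) (c : Fin N → ℝ)
    (r p : Fin n) :
    pMu Hs (Mrs n N hn 0 s H0 (lam, mu, c)).1 (Mrs n N hn 0 s H0 (lam, mu, c)).2.1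
        (Mrs n N hn 0 s H0 (lam, mu, c)).2.2 r p
      = pMu H0 lam mu c r p := by
  have hlamp : lam p ≠ 0 := hlam.1 p
  have h1 := pMu_formula n N f σ s Hs hHs lam hlam
    (fun i => lam i ^ ((0 : ℤ) - (s : ℕ)) * mu i)
    (fun j : Fin N =>
      if h : 0 ≤ (j : ℕ) ∧ (j : ℕ) < s then
        H0 lam mu c ⟨n + 0 - (j : ℕ) - 1, by obtain ⟨h1, h2⟩ := h; omega⟩
      else c j) r p
  have h2 := pMu_formula n N f σ 0 H0 hH0 lam hlam mu c r p
  have hMrs1 : (Mrs n N hn 0 s H0 (lam, mu, c)).1 = lam := rfl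
  have hMrs2 : (Mrs n N hn 0 s H0 (lam, mu, c)).2.1
      = fun i => lam i ^ ((0 : ℤ) - (s : ℕ)) * mu i := rfl
  have hMrs3 : (Mrs n N hn 0 s H0 (lam, mu, c)).2.2
      = fun j : Fin N =>
        if h : 0 ≤ (j : ℕ) ∧ (j : ℕ) < s then
          H0 lam mu c ⟨n + 0 - (j : ℕ) - 1, by obtain ⟨h1, h2⟩ := h; omega⟩
        else c j := rfl
  rw [hMrs1, hMrs2, hMrs3, h1, h2]
  have hz : lam p ^ (s : ℤ) * lam p ^ ((0 : ℤ) - (s : ℕ)) = lam p ^ ((0 : ℕ) : ℤ) := by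
    rw [← zpow_add₀ hlamp]
    norm_num
  calc 2 * (Matrix.of fun i q : Fin n => lam i ^ ((n : ℤ) - 1 - (q : ℕ)))⁻¹ r p
        * (leval f (lam p) * lam p ^ (s : ℤ)) * (lam p ^ ((0 : ℤ) - (s : ℕ)) * mu p)
      = 2 * (Matrix.of fun i q : Fin n => lam i ^ ((n : ℤ) - 1 - (q : ℕ)))⁻¹ r p
        * (leval f (lam p)
          * (lam p ^ (s : ℤ) * lam p ^ ((0 : ℤ) - (s : ℕ)))) * mu p := by ring
    _ = _ := by rw [hz]; try ring
end
end

section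
/- (Identity (A3) of the paper.) Let s ∈ {1,…,N}. For every (λ, μ, c) ∈ Ω × ℝⁿ × ℝᴺ, every r ∈ {1,…,n} and every p ∈ {1,…,n}: (∂h_r^{(s)}/∂λ_p)( M_{0→s}(λ, μ, c) ) = λ_p^{−s} (∂h_r/∂λ_p)(λ, μ, c) + s λ_p^{−s−1} μ_p (∂h_r/∂μ_p)(λ, μ, c). -/
open Finset Function

noncomputable section

namespace A3aux

open Matrix

open Matrix

/-- Vandermonde-type matrix with columns `λ^{n-1}, …, λ^0`. -/
def Vm (n : ℕ) (lam : Fin n → ℝ) : Matrix (Fin n) (Fin n) ℝ :=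
  Matrix.of fun i q => lam i ^ (n - 1 - (q : ℕ))

/-- Right-hand side vector of the separation system. -/
def Bv (n N : ℕ) (f σ : LaurentPolynomial ℝ) (s : ℕ)
    (lam mu : Fin n → ℝ) (c : Fin N → ℝ) (i : Fin n) : ℝ :=
  leval f (lam i) * lam i ^ (s : ℤ) * mu i ^ 2
    - leval σ (lam i) * lam i ^ (-(s : ℤ))
    - ∑ j : Fin N,
        (if s ≤ (j : ℕ) then c j * lam i ^ ((n : ℤ) + (j : ℕ) - (s : ℕ))
          else c j * lam i ^ (((j : ℕ) : ℤ) - (s : ℕ)))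

lemma zpow_eq_pow {n : ℕ} (x : ℝ) (q : Fin n) :
    x ^ ((n : ℤ) - 1 - (q : ℕ)) = x ^ (n - 1 - (q : ℕ)) := by
  have hq := q.isLt
  have h : (n : ℤ) - 1 - (q : ℕ) = ((n - 1 - (q : ℕ) : ℕ) : ℤ) := by omega
  rw [h, zpow_natCast]

lemma sep_system {n N : ℕ} {f σ : LaurentPolynomial ℝ} {s : ℕ} {H}
    (hH : SepSol n N f σ s H) {lam : Fin n → ℝ} (hlam : lam ∈ Omega n)
    (mu : Fin n → ℝ) (c : Fin N → ℝ) :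
    Vm n lam *ᵥ H lam mu c = Bv n N f σ s lam mu c := by
  funext i
  have h := hH lam hlam mu c i
  simp only [Matrix.mulVec, dotProduct, Vm, Matrix.of_apply, Bv]
  have hq : ∀ q : Fin n, lam i ^ (n - 1 - (q : ℕ)) * H lam mu c q
      = H lam mu c q * lam i ^ ((n : ℤ) - 1 - (q : ℕ)) := fun q => by
    rw [zpow_eq_pow]; ring
  rw [Finset.sum_congr rfl fun q _ => hq q]
  linarith [h]

lemma Vm_eq {n : ℕ} (lam : Fin n → ℝ) :
    Vm n lam = (Matrix.vandermonde lam).submatrix id Fin.revPerm := by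
  ext i q
  simp only [Vm, Matrix.of_apply, Matrix.submatrix_apply, Matrix.vandermonde_apply, id_eq]
  congr 1
  show n - 1 - (q : ℕ) = ((Fin.rev q : Fin n) : ℕ)
  rw [Fin.val_rev]
  omega

lemma det_Vm_ne_zero {n : ℕ} {lam : Fin n → ℝ} (h : Function.Injective lam) :
    (Vm n lam).det ≠ 0 := by
  rw [Vm_eq]
  have : ((Matrix.vandermonde lam).submatrix id ⇑(Fin.revPerm : Equiv.Perm (Fin n))).det
      = (Equiv.Perm.sign (Fin.revPerm : Equiv.Perm (Fin n)) : ℝ) * (Matrix.vandermonde lam).det :=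
    Matrix.det_permute' _ _
  rw [this]
  have hv : (Matrix.vandermonde lam).det ≠ 0 := Matrix.det_vandermonde_ne_zero_iff.mpr h
  have hs : ((Equiv.Perm.sign (Fin.revPerm : Equiv.Perm (Fin n)) : ℤ) : ℝ) ≠ 0 := by
    rcases Int.units_eq_one_or (Equiv.Perm.sign (Fin.revPerm : Equiv.Perm (Fin n))) with h1 | h1 <;>
      rw [h1] <;> norm_num
  exact mul_ne_zero hs hv

lemma system_unique {n : ℕ} {lam : Fin n → ℝ} (h : Function.Injective lam)
    {x y : Fin n → ℝ} (hxy : Vm n lam *ᵥ x = Vm n lam *ᵥ y) : x = y := by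
  have hdet : IsUnit (Vm n lam) :=
    (Matrix.isUnit_iff_isUnit_det _).mpr (isUnit_iff_ne_zero.mpr (det_Vm_ne_zero h))
  exact Matrix.mulVec_injective_iff_isUnit.mpr hdet hxy

/-- Explicit (Cramer) solution of the separation system. -/
def Hexp (n N : ℕ) (f σ : LaurentPolynomial ℝ) (s : ℕ)
    (lam mu : Fin n → ℝ) (c : Fin N → ℝ) (q : Fin n) : ℝ :=
  (Vm n lam).det⁻¹ * ((Vm n lam).updateCol q (Bv n N f σ s lam mu c)).det

lemma Hexp_solves {n N : ℕ} (f σ : LaurentPolynomial ℝ) (s : ℕ)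
    {lam : Fin n → ℝ} (hlam : Function.Injective lam) (mu : Fin n → ℝ) (c : Fin N → ℝ) :
    Vm n lam *ᵥ Hexp n N f σ s lam mu c = Bv n N f σ s lam mu c := by
  have hdet := det_Vm_ne_zero hlam
  have h1 : Hexp n N f σ s lam mu c
      = (Vm n lam).det⁻¹ • Matrix.cramer (Vm n lam) (Bv n N f σ s lam mu c) := by
    funext q
    simp [Hexp, Matrix.cramer_apply, smul_eq_mul]
  rw [h1, Matrix.mulVec_smul, Matrix.mulVec_cramer, smul_smul, inv_mul_cancel₀ hdet, one_smul]

lemma H_eq_Hexp {n N : ℕ} {f σ : LaurentPolynomial ℝ} {s : ℕ} {H}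
    (hH : SepSol n N f σ s H) {lam : Fin n → ℝ} (hlam : lam ∈ Omega n)
    (mu : Fin n → ℝ) (c : Fin N → ℝ) :
    H lam mu c = Hexp n N f σ s lam mu c :=
  system_unique hlam.2 (by rw [sep_system hH hlam, Hexp_solves f σ s hlam.2])

lemma differentiableAt_det {n : ℕ} {A : ℝ → Matrix (Fin n) (Fin n) ℝ} {x : ℝ}
    (h : ∀ i j, DifferentiableAt ℝ (fun t => A t i j) x) :
    DifferentiableAt ℝ (fun t => (A t).det) x := by
  simp only [Matrix.det_apply']
  exact DifferentiableAt.fun_sum fun σ _ =>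
    (DifferentiableAt.fun_finsetProd fun i _ => h (σ i) i).const_mul _

def dleval (p : LaurentPolynomial ℝ) (x : ℝ) : ℝ :=
  Finsupp.sum p.coeff fun k a => a * ((k : ℝ) * x ^ (k - 1))

lemma hasDerivAt_leval (p : LaurentPolynomial ℝ) {x : ℝ} (hx : x ≠ 0) :
    HasDerivAt (leval p) (dleval p x) x := by
  have h : leval p = fun y => ∑ k ∈ p.coeff.support, p.coeff k * y ^ k := rfl
  have h2 : dleval p x = ∑ k ∈ p.coeff.support, p.coeff k * ((k : ℝ) * x ^ (k - 1)) := rfl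
  rw [h, h2]
  exact HasDerivAt.fun_sum fun k _ => (hasDerivAt_zpow k x (Or.inl hx)).const_mul (p.coeff k)

lemma update_entry_hasDerivAt {n : ℕ} (lam : Fin n → ℝ) (p i : Fin n) (m : ℕ) (x : ℝ) :
    HasDerivAt (fun t => Function.update lam p t i ^ m)
      (if i = p then (m : ℝ) * x ^ (m - 1) else 0) x := by
  rcases eq_or_ne i p with rfl | hi
  · simp only [Function.update_self, if_pos rfl]
    exact hasDerivAt_pow m x
  · simp only [Function.update_of_ne hi, if_neg hi]
    exact hasDerivAt_const x _

lemma update_mem_Omega {n : ℕ} {lam : Fin n → ℝ} (hlam : lam ∈ Omega n) (p : Fin n) {t : ℝ}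
    (ht0 : t ≠ 0) (htj : ∀ j, j ≠ p → t ≠ lam j) : Function.update lam p t ∈ Omega n := by
  obtain ⟨h0, hinj⟩ := hlam
  constructor
  · intro i
    rcases eq_or_ne i p with rfl | h
    · simpa using ht0
    · simpa [Function.update_of_ne h] using h0 i
  · intro i j hij
    rcases eq_or_ne i p with hi | hi
    · rcases eq_or_ne j p with hj | hj
      · rw [hi, hj]
      · rw [hi, Function.update_self, Function.update_of_ne hj] at hij
        exact absurd hij (htj j hj)
    · rcases eq_or_ne j p with hj | hj
      · rw [hj, Function.update_self, Function.update_of_ne hi] at hij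
        exact absurd hij.symm (htj i hi)
      · rw [Function.update_of_ne hi, Function.update_of_ne hj] at hij
        exact hinj hij

lemma eventually_update_ok {n : ℕ} {lam : Fin n → ℝ} (hlam : lam ∈ Omega n) (p : Fin n) :
    ∀ᶠ t in nhds (lam p), t ≠ 0 ∧ ∀ j, j ≠ p → t ≠ lam j := by
  obtain ⟨h0, hinj⟩ := hlam
  have hfin : Set.Finite (insert (0 : ℝ) (lam '' {j | j ≠ p})) :=
    (Set.Finite.image lam (Set.toFinite _)).insert 0
  have hopen : IsOpen (insert (0 : ℝ) (lam '' {j | j ≠ p}))ᶜ := hfin.isClosed.isOpen_compl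
  have hmem : lam p ∈ (insert (0 : ℝ) (lam '' {j | j ≠ p}))ᶜ := by
    simp only [Set.mem_compl_iff, Set.mem_insert_iff, Set.mem_image, Set.mem_setOf_eq, not_or,
      not_exists]
    exact ⟨h0 p, fun j hj => hj.1 (hinj hj.2)⟩
  filter_upwards [hopen.mem_nhds hmem] with t ht
  simp only [Set.mem_compl_iff, Set.mem_insert_iff, Set.mem_image, Set.mem_setOf_eq, not_or,
    not_exists] at ht
  exact ⟨ht.1, fun j hj hte => (ht.2 j) ⟨hj, hte.symm⟩⟩


/-- Explicit derivative of the right-hand side `Bv i` in the direction `λ_p`, at `i = p`. -/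
def DBlam (n N : ℕ) (f σ : LaurentPolynomial ℝ) (s : ℕ)
    (lam mu : Fin n → ℝ) (c : Fin N → ℝ) (p : Fin n) : ℝ :=
  (dleval f (lam p) * lam p ^ (s : ℤ) + leval f (lam p) * (((s : ℤ) : ℝ) * lam p ^ ((s : ℤ) - 1)))
      * mu p ^ 2
    - (dleval σ (lam p) * lam p ^ (-(s : ℤ))
        + leval σ (lam p) * (((-(s : ℤ) : ℤ) : ℝ) * lam p ^ (-(s : ℤ) - 1)))
    - ∑ j : Fin N,
        (if s ≤ (j : ℕ) then
            c j * ((((n : ℤ) + (j : ℕ) - (s : ℕ) : ℤ) : ℝ) * lam p ^ ((n : ℤ) + (j : ℕ) - (s : ℕ) - 1))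
          else
            c j * (((((j : ℕ) : ℤ) - (s : ℕ) : ℤ) : ℝ) * lam p ^ (((j : ℕ) : ℤ) - (s : ℕ) - 1)))

lemma hasDerivAt_Bv_lam {n N : ℕ} (f σ : LaurentPolynomial ℝ) (s : ℕ)
    (lam mu : Fin n → ℝ) (c : Fin N → ℝ) (p : Fin n) (h0 : lam p ≠ 0) (i : Fin n) :
    HasDerivAt (fun t => Bv n N f σ s (Function.update lam p t) mu c i)
      (if i = p then DBlam n N f σ s lam mu c p else 0) (lam p) := by
  rcases eq_or_ne i p with rfl | hi
  · have hfun : (fun t => Bv n N f σ s (Function.update lam i t) mu c i)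
        = fun t => leval f t * t ^ (s : ℤ) * mu i ^ 2 - leval σ t * t ^ (-(s : ℤ))
          - ∑ j : Fin N,
              (if s ≤ (j : ℕ) then c j * t ^ ((n : ℤ) + (j : ℕ) - (s : ℕ))
                else c j * t ^ (((j : ℕ) : ℤ) - (s : ℕ))) := by
      funext t
      simp [Bv, Function.update_self]
    rw [hfun, if_pos rfl]
    have h1 : HasDerivAt (fun t : ℝ => leval f t * t ^ (s : ℤ))
        (dleval f (lam i) * lam i ^ (s : ℤ)
          + leval f (lam i) * ((((s : ℤ)) : ℝ) * lam i ^ ((s : ℤ) - 1))) (lam i) :=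
      (hasDerivAt_leval f h0).mul (hasDerivAt_zpow (s : ℤ) (lam i) (Or.inl h0))
    have h2 : HasDerivAt (fun t : ℝ => leval σ t * t ^ (-(s : ℤ)))
        (dleval σ (lam i) * lam i ^ (-(s : ℤ))
          + leval σ (lam i) * ((((-(s : ℤ)) : ℤ) : ℝ) * lam i ^ (-(s : ℤ) - 1))) (lam i) :=
      (hasDerivAt_leval σ h0).mul (hasDerivAt_zpow (-(s : ℤ)) (lam i) (Or.inl h0))
    have h3 : HasDerivAt (fun t : ℝ => ∑ j : Fin N,
        (if s ≤ (j : ℕ) then c j * t ^ ((n : ℤ) + (j : ℕ) - (s : ℕ))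
          else c j * t ^ (((j : ℕ) : ℤ) - (s : ℕ))))
        (∑ j : Fin N,
          (if s ≤ (j : ℕ) then
              c j * ((((n : ℤ) + (j : ℕ) - (s : ℕ) : ℤ) : ℝ) * lam i ^ ((n : ℤ) + (j : ℕ) - (s : ℕ) - 1))
            else
              c j * (((((j : ℕ) : ℤ) - (s : ℕ) : ℤ) : ℝ) * lam i ^ (((j : ℕ) : ℤ) - (s : ℕ) - 1))))
        (lam i) := by
      refine HasDerivAt.fun_sum fun j _ => ?_
      by_cases hj : s ≤ (j : ℕ)
      · simp only [if_pos hj]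
        exact (hasDerivAt_zpow ((n : ℤ) + (j : ℕ) - (s : ℕ)) (lam i) (Or.inl h0)).const_mul (c j)
      · simp only [if_neg hj]
        exact (hasDerivAt_zpow (((j : ℕ) : ℤ) - (s : ℕ)) (lam i) (Or.inl h0)).const_mul (c j)
    exact ((h1.mul_const (mu i ^ 2)).sub h2).sub h3
  · have hfun : (fun t => Bv n N f σ s (Function.update lam p t) mu c i)
        = fun _ => Bv n N f σ s lam mu c i := by
      funext t
      simp [Bv, Function.update_of_ne hi]
    rw [hfun, if_neg hi]
    exact hasDerivAt_const _ _

lemma hasDerivAt_Vm_entry {n : ℕ} (lam : Fin n → ℝ) (p i q : Fin n) :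
    HasDerivAt (fun t => Vm n (Function.update lam p t) i q)
      (if i = p then ((n - 1 - (q : ℕ) : ℕ) : ℝ) * lam p ^ (n - 1 - (q : ℕ) - 1 : ℕ) else 0)
      (lam p) := by
  simpa only [Vm, Matrix.of_apply] using
    update_entry_hasDerivAt lam p i (n - 1 - (q : ℕ)) (lam p)

lemma dpow_term (x : ℝ) {n : ℕ} (q : Fin n) :
    ((n - 1 - (q : ℕ) : ℕ) : ℝ) * x ^ (n - 1 - (q : ℕ) - 1 : ℕ)
      = ((n : ℝ) - 1 - (q : ℕ)) * x ^ ((n : ℤ) - 2 - (q : ℕ)) := by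
  have hq := q.isLt
  rcases eq_or_ne ((q : ℕ) + 1) n with he | he
  · have h1 : (n - 1 - (q : ℕ) : ℕ) = 0 := by omega
    have h2 : ((n : ℝ) - 1 - (q : ℕ)) = 0 := by
      have : ((n : ℝ)) = ((q : ℕ) : ℝ) + 1 := by exact_mod_cast congrArg (Nat.cast (R := ℝ)) he.symm
      rw [this]; ring
    rw [h1, h2]; simp
  · have h3 : ((n : ℤ) - 2 - (q : ℕ)) = ((n - 1 - (q : ℕ) - 1 : ℕ) : ℤ) := by omega
    rw [h3, zpow_natCast]
    congr 1
    rw [Nat.cast_sub (by omega), Nat.cast_sub (by omega)]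
    norm_num

lemma deriv_system_lam {n N : ℕ} {f σ : LaurentPolynomial ℝ} {s : ℕ} {H}
    (hH : SepSol n N f σ s H) {lam : Fin n → ℝ} (hlam : lam ∈ Omega n)
    (mu : Fin n → ℝ) (c : Fin N → ℝ) (p i : Fin n) :
    ∑ q : Fin n, pLam H lam mu c q p * lam i ^ ((n : ℤ) - 1 - (q : ℕ))
      + (if i = p then
          ∑ q : Fin n, H lam mu c q * (((n : ℝ) - 1 - (q : ℕ)) * lam p ^ ((n : ℤ) - 2 - (q : ℕ)))
        else 0)
      = if i = p then DBlam n N f σ s lam mu c p else 0 := by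
  classical
  obtain ⟨h0, hinj⟩ := hlam
  have hx0 : lam p ≠ 0 := h0 p
  have hev := eventually_update_ok ⟨h0, hinj⟩ p
  set g : ℝ → Fin n → ℝ := fun t => Hexp n N f σ s (Function.update lam p t) mu c with hg
  -- differentiability of g
  have hVder : ∀ i' q : Fin n, HasDerivAt (fun t => Vm n (Function.update lam p t) i' q)
      (if i' = p then ((n - 1 - (q : ℕ) : ℕ) : ℝ) * lam p ^ (n - 1 - (q : ℕ) - 1 : ℕ) else 0)
      (lam p) := fun i' q => hasDerivAt_Vm_entry lam p i' q
  have hdet_diff : DifferentiableAt ℝ (fun t => (Vm n (Function.update lam p t)).det) (lam p) :=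
    differentiableAt_det fun i' q => (hVder i' q).differentiableAt
  have hdet_ne : (fun t => (Vm n (Function.update lam p t)).det) (lam p) ≠ 0 := by
    simp only [Function.update_eq_self]
    exact det_Vm_ne_zero hinj
  have hBder : ∀ i' : Fin n, HasDerivAt (fun t => Bv n N f σ s (Function.update lam p t) mu c i')
      (if i' = p then DBlam n N f σ s lam mu c p else 0) (lam p) :=
    fun i' => hasDerivAt_Bv_lam f σ s lam mu c p hx0 i'
  have hgq : ∀ q : Fin n, DifferentiableAt ℝ (fun t => g t q) (lam p) := by
    intro q
    refine DifferentiableAt.mul (hdet_diff.inv hdet_ne) ?_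
    refine differentiableAt_det fun i' j => ?_
    simp only [Matrix.updateCol_apply]
    by_cases hjq : j = q
    · simp only [if_pos hjq]
      exact (hBder i').differentiableAt
    · simp only [if_neg hjq]
      exact (hVder i' j).differentiableAt
  -- g agrees with H along the path
  have hpath : ∀ᶠ t in nhds (lam p), H (Function.update lam p t) mu c = g t := by
    filter_upwards [hev] with t ht
    exact H_eq_Hexp hH (update_mem_Omega ⟨h0, hinj⟩ p ht.1 ht.2) mu c
  have hgx0 : g (lam p) = H lam mu c := by
    rw [hg]
    simp only [Function.update_eq_self]
    exact (H_eq_Hexp hH ⟨h0, hinj⟩ mu c).symm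
  -- pLam equals deriv of g components
  have hplam : ∀ q : Fin n, pLam H lam mu c q p = deriv (fun t => g t q) (lam p) := by
    intro q
    apply Filter.EventuallyEq.deriv_eq
    filter_upwards [hpath] with t ht
    exact congrFun ht q
  -- derivative of the i-th relation
  have hΦ : HasDerivAt (fun t => ∑ q : Fin n, g t q * Vm n (Function.update lam p t) i q)
      (∑ q : Fin n, (deriv (fun t => g t q) (lam p) * Vm n lam i q
        + H lam mu c q * (if i = p then
            ((n - 1 - (q : ℕ) : ℕ) : ℝ) * lam p ^ (n - 1 - (q : ℕ) - 1 : ℕ) else 0)))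
      (lam p) := by
    refine HasDerivAt.fun_sum fun q _ => ?_
    have h := ((hgq q).hasDerivAt).mul (hVder i q)
    have hval : deriv (fun t => g t q) (lam p) * Vm n (Function.update lam p (lam p)) i q
        + g (lam p) q * (if i = p then
            ((n - 1 - (q : ℕ) : ℕ) : ℝ) * lam p ^ (n - 1 - (q : ℕ) - 1 : ℕ) else 0)
        = deriv (fun t => g t q) (lam p) * Vm n lam i q
        + H lam mu c q * (if i = p then
            ((n - 1 - (q : ℕ) : ℕ) : ℝ) * lam p ^ (n - 1 - (q : ℕ) - 1 : ℕ) else 0) := by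
      rw [Function.update_eq_self, hgx0]
    rw [← hval]
    exact h
  have hΦeq : (fun t => Bv n N f σ s (Function.update lam p t) mu c i)
      =ᶠ[nhds (lam p)] (fun t => ∑ q : Fin n, g t q * Vm n (Function.update lam p t) i q) := by
    filter_upwards [hev] with t ht
    have hmem := update_mem_Omega ⟨h0, hinj⟩ p ht.1 ht.2
    have hsol := Hexp_solves f σ s hmem.2 mu c
    have := congrFun hsol i
    simp only [Matrix.mulVec, dotProduct] at this
    rw [← this]
    exact (Finset.sum_congr rfl fun q _ => (mul_comm _ _)).symm
  have hder2 : HasDerivAt (fun t => Bv n N f σ s (Function.update lam p t) mu c i)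
      (∑ q : Fin n, (deriv (fun t => g t q) (lam p) * Vm n lam i q
        + H lam mu c q * (if i = p then
            ((n - 1 - (q : ℕ) : ℕ) : ℝ) * lam p ^ (n - 1 - (q : ℕ) - 1 : ℕ) else 0)))
      (lam p) := hΦ.congr_of_eventuallyEq hΦeq
  have huniq := hder2.unique (hBder i)
  -- massage
  rw [← huniq, Finset.sum_add_distrib]
  congr 1
  · refine Finset.sum_congr rfl fun q _ => ?_
    rw [hplam q, zpow_eq_pow]
    rfl
  · by_cases hip : i = p
    · simp only [if_pos hip]
      refine Finset.sum_congr rfl fun q _ => ?_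
      rw [dpow_term]
    · simp only [if_neg hip, mul_zero, Finset.sum_const_zero]

lemma deriv_system_mu {n N : ℕ} {f σ : LaurentPolynomial ℝ} {s : ℕ} {H}
    (hH : SepSol n N f σ s H) {lam : Fin n → ℝ} (hlam : lam ∈ Omega n)
    (mu : Fin n → ℝ) (c : Fin N → ℝ) (p i : Fin n) :
    ∑ q : Fin n, pMu H lam mu c q p * lam i ^ ((n : ℤ) - 1 - (q : ℕ))
      = if i = p then leval f (lam p) * lam p ^ (s : ℤ) * (2 * mu p) else 0 := by
  classical
  obtain ⟨h0, hinj⟩ := hlam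
  set g : ℝ → Fin n → ℝ := fun t => Hexp n N f σ s lam (Function.update mu p t) c with hg
  have hBder : ∀ i' : Fin n,
      HasDerivAt (fun t => Bv n N f σ s lam (Function.update mu p t) c i')
        (if i' = p then leval f (lam p) * lam p ^ (s : ℤ) * (2 * mu p) else 0) (mu p) := by
    intro i'
    rcases eq_or_ne i' p with rfl | hi
    · have hfun : (fun t => Bv n N f σ s lam (Function.update mu i' t) c i')
          = fun t => leval f (lam i') * lam i' ^ (s : ℤ) * t ^ 2
            - leval σ (lam i') * lam i' ^ (-(s : ℤ))
            - ∑ j : Fin N,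
                (if s ≤ (j : ℕ) then c j * lam i' ^ ((n : ℤ) + (j : ℕ) - (s : ℕ))
                  else c j * lam i' ^ (((j : ℕ) : ℤ) - (s : ℕ))) := by
        funext t
        simp [Bv, Function.update_self]
      rw [hfun, if_pos rfl]
      have h1 : HasDerivAt (fun t : ℝ => leval f (lam i') * lam i' ^ (s : ℤ) * t ^ 2)
          (leval f (lam i') * lam i' ^ (s : ℤ) * (2 * mu i')) (mu i') := by
        have := (hasDerivAt_pow 2 (mu i')).const_mul (leval f (lam i') * lam i' ^ (s : ℤ))
        simpa [mul_comm, mul_assoc] using this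
      exact (h1.sub_const _).sub_const _
    · have hfun : (fun t => Bv n N f σ s lam (Function.update mu p t) c i')
          = fun _ => Bv n N f σ s lam mu c i' := by
        funext t
        simp [Bv, Function.update_of_ne hi]
      rw [hfun, if_neg hi]
      exact hasDerivAt_const _ _
  have hgq : ∀ q : Fin n, DifferentiableAt ℝ (fun t => g t q) (mu p) := by
    intro q
    refine DifferentiableAt.mul (differentiableAt_const _) ?_
    refine differentiableAt_det fun i' j => ?_
    simp only [Matrix.updateCol_apply]
    by_cases hjq : j = q
    · simp only [if_pos hjq]
      exact (hBder i').differentiableAt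
    · simp only [if_neg hjq]
      exact differentiableAt_const _
  have hpath : ∀ t : ℝ, H lam (Function.update mu p t) c = g t := fun t =>
    H_eq_Hexp hH ⟨h0, hinj⟩ _ c
  have hgx0 : g (mu p) = H lam mu c := by
    rw [hg]
    simp only [Function.update_eq_self]
    exact (H_eq_Hexp hH ⟨h0, hinj⟩ mu c).symm
  have hpmu : ∀ q : Fin n, pMu H lam mu c q p = deriv (fun t => g t q) (mu p) := by
    intro q
    apply Filter.EventuallyEq.deriv_eq
    exact Filter.Eventually.of_forall fun t => congrFun (hpath t) q
  have hΦ : HasDerivAt (fun t => ∑ q : Fin n, g t q * Vm n lam i q)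
      (∑ q : Fin n, deriv (fun t => g t q) (mu p) * Vm n lam i q) (mu p) :=
    HasDerivAt.fun_sum fun q _ => ((hgq q).hasDerivAt).mul_const _
  have hΦeq : (fun t => Bv n N f σ s lam (Function.update mu p t) c i)
      =ᶠ[nhds (mu p)] (fun t => ∑ q : Fin n, g t q * Vm n lam i q) := by
    refine Filter.Eventually.of_forall fun t => ?_
    show Bv n N f σ s lam (Function.update mu p t) c i = ∑ q : Fin n, g t q * Vm n lam i q
    have hsol := Hexp_solves f σ s hinj (Function.update mu p t) c
    have := congrFun hsol i
    simp only [Matrix.mulVec, dotProduct] at this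
    rw [← this]
    exact (Finset.sum_congr rfl fun q _ => (mul_comm _ _)).symm
  have hder2 : HasDerivAt (fun t => Bv n N f σ s lam (Function.update mu p t) c i)
      (∑ q : Fin n, deriv (fun t => g t q) (mu p) * Vm n lam i q) (mu p) :=
    hΦ.congr_of_eventuallyEq hΦeq
  have huniq := hder2.unique (hBder i)
  rw [← huniq]
  refine Finset.sum_congr rfl fun q _ => ?_
  rw [hpmu q, zpow_eq_pow]
  rfl


lemma sum_split (M k : ℕ) (hk : k ≤ M) (g : ℕ → ℝ) :
    ∑ x ∈ Finset.range M, g x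
      = ∑ x ∈ Finset.range k, g x + ∑ x ∈ Finset.Ico k M, g x := by
  rw [Finset.range_eq_Ico, ← Finset.sum_Ico_consecutive _ (Nat.zero_le k) hk,
    ← Finset.range_eq_Ico]

lemma G1 {n N s : ℕ} (hn : 1 ≤ n) (hsN : s ≤ N) (hNn : N ≤ n) {L m F S : ℝ} (hL : L ≠ 0)
    (cc hh : ℕ → ℝ)
    (hrel : S + (∑ j ∈ Finset.range N, cc j * L ^ ((n : ℤ) + (j : ℕ)))
        + (∑ q ∈ Finset.range n, hh q * L ^ ((n : ℤ) - 1 - (q : ℕ))) = F * m ^ 2) :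
    ∑ q ∈ Finset.range n,
        (if q < s then cc (s - 1 - q) else hh (q - s)) * L ^ ((n : ℤ) - 1 - (q : ℕ))
      = F * L ^ (s : ℤ) * (L ^ (-(s : ℤ)) * m) ^ 2 - S * L ^ (-(s : ℤ))
        - ∑ j ∈ Finset.range N,
            (if s ≤ j then cc j * L ^ ((n : ℤ) + (j : ℕ) - (s : ℕ))
              else hh (n - 1 - j) * L ^ (((j : ℕ) : ℤ) - (s : ℕ))) := by
  have hsn : s ≤ n := le_trans hsN hNn
  have e1 : F * L ^ (s : ℤ) * (L ^ (-(s : ℤ)) * m) ^ 2 = (F * m ^ 2) * L ^ (-(s : ℤ)) := by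
    rw [mul_pow, ← zpow_natCast (L ^ (-(s : ℤ))) 2, ← _root_.zpow_mul,
      show (-(s : ℤ)) * ((2 : ℕ) : ℤ) = -(s : ℤ) + -(s : ℤ) by push_cast; ring,
      zpow_add₀ hL,
      show F * L ^ (s : ℤ) * (L ^ (-(s : ℤ)) * L ^ (-(s : ℤ)) * m ^ 2)
        = F * m ^ 2 * (L ^ (s : ℤ) * L ^ (-(s : ℤ)) * L ^ (-(s : ℤ))) by ring,
      ← zpow_add₀ hL]
    norm_num
  rw [e1, ← hrel]
  have eA : (S + (∑ j ∈ Finset.range N, cc j * L ^ ((n : ℤ) + (j : ℕ)))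
        + (∑ q ∈ Finset.range n, hh q * L ^ ((n : ℤ) - 1 - (q : ℕ)))) * L ^ (-(s : ℤ))
        - S * L ^ (-(s : ℤ))
      = (∑ j ∈ Finset.range N, cc j * L ^ ((n : ℤ) + (j : ℕ))) * L ^ (-(s : ℤ))
        + (∑ q ∈ Finset.range n, hh q * L ^ ((n : ℤ) - 1 - (q : ℕ))) * L ^ (-(s : ℤ)) := by
    ring
  rw [eA]
  have eC : (∑ j ∈ Finset.range N, cc j * L ^ ((n : ℤ) + (j : ℕ))) * L ^ (-(s : ℤ))
      = ∑ j ∈ Finset.range N, cc j * L ^ ((n : ℤ) + (j : ℕ) - (s : ℕ)) := by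
    rw [Finset.sum_mul]
    refine Finset.sum_congr rfl fun j hj => ?_
    rw [mul_assoc, ← zpow_add₀ hL,
      show (n : ℤ) + (j : ℕ) + -((s : ℕ) : ℤ) = (n : ℤ) + (j : ℕ) - (s : ℕ) from by omega]
  have eH : (∑ q ∈ Finset.range n, hh q * L ^ ((n : ℤ) - 1 - (q : ℕ))) * L ^ (-(s : ℤ))
      = ∑ q ∈ Finset.range n, hh q * L ^ ((n : ℤ) - 1 - (q : ℕ) - (s : ℕ)) := by
    rw [Finset.sum_mul]
    refine Finset.sum_congr rfl fun q hq => ?_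
    rw [mul_assoc, ← zpow_add₀ hL,
      show (n : ℤ) - 1 - (q : ℕ) + -((s : ℕ) : ℤ) = (n : ℤ) - 1 - (q : ℕ) - (s : ℕ) from by omega]
  rw [eC, eH]
  -- split all four sums
  rw [sum_split n s hsn
    (fun q => (if q < s then cc (s - 1 - q) else hh (q - s)) * L ^ ((n : ℤ) - 1 - (q : ℕ)))]
  rw [sum_split N s hsN
    (fun j => (if s ≤ j then cc j * L ^ ((n : ℤ) + (j : ℕ) - (s : ℕ))
      else hh (n - 1 - j) * L ^ (((j : ℕ) : ℤ) - (s : ℕ))))]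
  rw [sum_split N s hsN (fun j => cc j * L ^ ((n : ℤ) + (j : ℕ) - (s : ℕ)))]
  rw [sum_split n (n - s) (Nat.sub_le n s)
    (fun q => hh q * L ^ ((n : ℤ) - 1 - (q : ℕ) - (s : ℕ)))]
  have P1 : ∑ q ∈ Finset.range s,
      (if q < s then cc (s - 1 - q) else hh (q - s)) * L ^ ((n : ℤ) - 1 - (q : ℕ))
      = ∑ j ∈ Finset.range s, cc j * L ^ ((n : ℤ) + (j : ℕ) - (s : ℕ)) := by
    rw [← Finset.sum_range_reflect (fun j => cc j * L ^ ((n : ℤ) + (j : ℕ) - (s : ℕ))) s]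
    refine Finset.sum_congr rfl fun q hq => ?_
    have hq' := Finset.mem_range.mp hq
    rw [if_pos hq', show (n : ℤ) + ((s - 1 - q : ℕ) : ℤ) - (s : ℕ) = (n : ℤ) - 1 - (q : ℕ)
      by omega]
  have P2 : ∑ q ∈ Finset.Ico s n,
      (if q < s then cc (s - 1 - q) else hh (q - s)) * L ^ ((n : ℤ) - 1 - (q : ℕ))
      = ∑ q ∈ Finset.range (n - s), hh q * L ^ ((n : ℤ) - 1 - (q : ℕ) - (s : ℕ)) := by
    rw [Finset.sum_Ico_eq_sum_range]
    refine Finset.sum_congr rfl fun q hq => ?_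
    have hq' := Finset.mem_range.mp hq
    rw [if_neg (by omega), show s + q - s = q from by omega,
      show (n : ℤ) - 1 - ((s + q : ℕ) : ℤ) = (n : ℤ) - 1 - (q : ℕ) - (s : ℕ) by omega]
  have P3 : ∑ j ∈ Finset.range s,
      (if s ≤ j then cc j * L ^ ((n : ℤ) + (j : ℕ) - (s : ℕ))
        else hh (n - 1 - j) * L ^ (((j : ℕ) : ℤ) - (s : ℕ)))
      = ∑ q ∈ Finset.Ico (n - s) n, hh q * L ^ ((n : ℤ) - 1 - (q : ℕ) - (s : ℕ)) := by
    rw [Finset.sum_Ico_eq_sum_range,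
      ← Finset.sum_range_reflect
        (fun q => hh (n - s + q) * L ^ ((n : ℤ) - 1 - ((n - s + q : ℕ) : ℤ) - (s : ℕ)))
        (n - (n - s)),
      show n - (n - s) = s from by omega]
    refine Finset.sum_congr rfl fun j hj => ?_
    have hj' := Finset.mem_range.mp hj
    rw [if_neg (by omega), show n - s + (s - 1 - j) = n - 1 - j from by omega,
      show (n : ℤ) - 1 - ((n - 1 - j : ℕ) : ℤ) - (s : ℕ) = ((j : ℕ) : ℤ) - (s : ℕ) by omega]
  have P4 : ∑ j ∈ Finset.Ico s N,
      (if s ≤ j then cc j * L ^ ((n : ℤ) + (j : ℕ) - (s : ℕ))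
        else hh (n - 1 - j) * L ^ (((j : ℕ) : ℤ) - (s : ℕ)))
      = ∑ j ∈ Finset.Ico s N, cc j * L ^ ((n : ℤ) + (j : ℕ) - (s : ℕ)) := by
    refine Finset.sum_congr rfl fun j hj => ?_
    have hj' := (Finset.mem_Ico.mp hj).1
    rw [if_pos hj']
  rw [P1, P2, P3, P4]
  ring

lemma Hs_at_miura {n N : ℕ} (hn : 1 ≤ n) {f σ : LaurentPolynomial ℝ} {s : ℕ}
    (hsN : s ≤ N) (hNn : N ≤ n) {H0 Hs}
    (hH0 : SepSol n N f σ 0 H0) (hHs : SepSol n N f σ s Hs)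
    {lam : Fin n → ℝ} (hlam : lam ∈ Omega n) (mu : Fin n → ℝ) (c : Fin N → ℝ) :
    Hs lam (fun i => lam i ^ (-(s : ℤ)) * mu i)
        (fun j : Fin N => if (j : ℕ) < s then H0 lam mu c ⟨n - 1 - (j : ℕ), by omega⟩ else c j)
      = fun q : Fin n => if h : (q : ℕ) < s then c ⟨s - 1 - (q : ℕ), by omega⟩
          else H0 lam mu c ⟨(q : ℕ) - s, by omega⟩ := by
  classical
  obtain ⟨h0, hinj⟩ := hlam
  set cc : ℕ → ℝ := fun j => if h : j < N then c ⟨j, h⟩ else 0 with hcc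
  set hh : ℕ → ℝ := fun q => if h : q < n then H0 lam mu c ⟨q, h⟩ else 0 with hhh
  apply system_unique hinj
  rw [sep_system hHs ⟨h0, hinj⟩]
  funext i
  have hL : lam i ≠ 0 := h0 i
  -- curve-0 relation at `i`, in range form
  have hrel0 := hH0 lam ⟨h0, hinj⟩ mu c i
  simp only [Nat.cast_zero, neg_zero, zpow_zero, mul_one, sub_zero, Nat.zero_le, if_true] at hrel0
  have hc0 : ∑ j : Fin N, c j * lam i ^ ((n : ℤ) + ((j : ℕ) : ℤ))
      = ∑ j ∈ Finset.range N, cc j * lam i ^ ((n : ℤ) + (j : ℕ)) := by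
    rw [← Fin.sum_univ_eq_sum_range (fun j => cc j * lam i ^ ((n : ℤ) + (j : ℕ))) N]
    refine Finset.sum_congr rfl fun j _ => ?_
    simp only [hcc]
    rw [dif_pos j.isLt, Fin.eta]
  have hh0 : ∑ q : Fin n, H0 lam mu c q * lam i ^ ((n : ℤ) - 1 - (q : ℕ))
      = ∑ q ∈ Finset.range n, hh q * lam i ^ ((n : ℤ) - 1 - (q : ℕ)) := by
    rw [← Fin.sum_univ_eq_sum_range (fun q => hh q * lam i ^ ((n : ℤ) - 1 - (q : ℕ))) n]
    refine Finset.sum_congr rfl fun q _ => ?_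
    simp only [hhh]
    rw [dif_pos q.isLt, Fin.eta]
  rw [hc0, hh0] at hrel0
  -- right-hand side in range form
  have hrhs : (Vm n lam *ᵥ (fun q : Fin n => if h : (q : ℕ) < s then c ⟨s - 1 - (q : ℕ), by omega⟩
        else H0 lam mu c ⟨(q : ℕ) - s, by omega⟩)) i
      = ∑ q ∈ Finset.range n,
          (if q < s then cc (s - 1 - q) else hh (q - s)) * lam i ^ ((n : ℤ) - 1 - (q : ℕ)) := by
    simp only [Matrix.mulVec, dotProduct, Vm, Matrix.of_apply]
    rw [← Fin.sum_univ_eq_sum_range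
      (fun q => (if q < s then cc (s - 1 - q) else hh (q - s))
        * lam i ^ ((n : ℤ) - 1 - (q : ℕ))) n]
    refine Finset.sum_congr rfl fun q _ => ?_
    have hqn := q.isLt
    rw [zpow_eq_pow, mul_comm]
    congr 1
    by_cases hq : (q : ℕ) < s
    · rw [dif_pos hq, if_pos hq]
      simp only [hcc]
      rw [dif_pos (show s - 1 - (q : ℕ) < N by omega)]
    · rw [dif_neg hq, if_neg hq]
      simp only [hhh]
      rw [dif_pos (show (q : ℕ) - s < n by omega)]
  rw [hrhs, G1 hn hsN hNn hL cc hh hrel0]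
  -- convert the Bv sum
  have hcsum : (∑ j : Fin N,
        (if s ≤ (j : ℕ) then
            (if (j : ℕ) < s then H0 lam mu c ⟨n - 1 - (j : ℕ), by omega⟩ else c j)
              * lam i ^ ((n : ℤ) + (j : ℕ) - (s : ℕ))
          else
            (if (j : ℕ) < s then H0 lam mu c ⟨n - 1 - (j : ℕ), by omega⟩ else c j)
              * lam i ^ (((j : ℕ) : ℤ) - (s : ℕ))))
      = ∑ j ∈ Finset.range N,
          (if s ≤ j then cc j * lam i ^ ((n : ℤ) + (j : ℕ) - (s : ℕ))
            else hh (n - 1 - j) * lam i ^ (((j : ℕ) : ℤ) - (s : ℕ))) := by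
    rw [← Fin.sum_univ_eq_sum_range
      (fun j => (if s ≤ j then cc j * lam i ^ ((n : ℤ) + (j : ℕ) - (s : ℕ))
        else hh (n - 1 - j) * lam i ^ (((j : ℕ) : ℤ) - (s : ℕ)))) N]
    refine Finset.sum_congr rfl fun j _ => ?_
    have hjN := j.isLt
    by_cases hj : s ≤ (j : ℕ)
    · rw [if_pos hj, if_pos hj, if_neg (by omega)]
      simp only [hcc]
      rw [dif_pos j.isLt, Fin.eta]
    · rw [if_neg hj, if_neg hj, if_pos (by omega)]
      simp only [hhh]
      rw [dif_pos (show n - 1 - (j : ℕ) < n by omega)]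
  simp only [Bv]
  rw [hcsum]

lemma key_identity {n N s : ℕ} (hn : 1 ≤ n) (hsN : s ≤ N) (hNn : N ≤ n)
    {L m F F' S S' : ℝ} (hL : L ≠ 0) (cc hh : ℕ → ℝ)
    (hrel : S + (∑ j ∈ Finset.range N, cc j * L ^ ((n : ℤ) + (j : ℕ)))
        + (∑ q ∈ Finset.range n, hh q * L ^ ((n : ℤ) - 1 - (q : ℕ))) = F * m ^ 2) :
    (F' * L ^ (s : ℤ) + F * ((s : ℝ) * L ^ ((s : ℤ) - 1))) * (L ^ (-(s : ℤ)) * m) ^ 2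
      - (S' * L ^ (-(s : ℤ)) + S * (-(s : ℝ) * L ^ (-(s : ℤ) - 1)))
      - (∑ j ∈ Finset.range N,
          (if s ≤ j then
              cc j * (((n : ℝ) + (j : ℕ) - (s : ℕ)) * L ^ ((n : ℤ) + (j : ℕ) - (s : ℕ) - 1))
            else
              hh (n - 1 - j) * ((((j : ℕ) : ℝ) - (s : ℕ)) * L ^ (((j : ℕ) : ℤ) - (s : ℕ) - 1))))
      - (∑ q ∈ Finset.range n,
          (if q < s then cc (s - 1 - q) else hh (q - s))
            * (((n : ℝ) - 1 - (q : ℕ)) * L ^ ((n : ℤ) - 2 - (q : ℕ))))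
      = L ^ (-(s : ℤ)) * (F' * m ^ 2 - S'
            - ∑ j ∈ Finset.range N, cc j * (((n : ℝ) + (j : ℕ)) * L ^ ((n : ℤ) + (j : ℕ) - 1)))
        - L ^ (-(s : ℤ))
            * ∑ q ∈ Finset.range n, hh q * (((n : ℝ) - 1 - (q : ℕ)) * L ^ ((n : ℤ) - 2 - (q : ℕ)))
        + (s : ℝ) * L ^ (-(s : ℤ) - 1) * m * (F * (2 * m)) := by
  have hsn : s ≤ n := le_trans hsN hNn
  -- merged forms of the two right-hand side sum blocks
  have hA : L ^ (-(s : ℤ)) * (∑ j ∈ Finset.range N, cc j * (((n : ℝ) + (j : ℕ)) * L ^ ((n : ℤ) + (j : ℕ) - 1)))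
      - (s : ℝ) * L ^ (-(s : ℤ) - 1) * (∑ j ∈ Finset.range N, cc j * L ^ ((n : ℤ) + (j : ℕ)))
      = ∑ j ∈ Finset.range N,
          cc j * (((n : ℝ) + (j : ℕ) - (s : ℕ)) * L ^ ((n : ℤ) + (j : ℕ) - (s : ℕ) - 1)) := by
    rw [Finset.mul_sum, Finset.mul_sum, ← Finset.sum_sub_distrib]
    refine Finset.sum_congr rfl fun j _ => ?_
    have p1 : L ^ (-(s : ℤ)) * L ^ ((n : ℤ) + (j : ℕ) - 1)
        = L ^ ((n : ℤ) + (j : ℕ) - (s : ℕ) - 1) := by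
      rw [← zpow_add₀ hL]; congr 1; omega
    have p2 : L ^ (-(s : ℤ) - 1) * L ^ ((n : ℤ) + (j : ℕ))
        = L ^ ((n : ℤ) + (j : ℕ) - (s : ℕ) - 1) := by
      rw [← zpow_add₀ hL]; congr 1; omega
    linear_combination (cc j * ((n : ℝ) + (j : ℕ))) * p1 - (s : ℝ) * cc j * p2
  have hP : L ^ (-(s : ℤ)) * (∑ q ∈ Finset.range n, hh q * (((n : ℝ) - 1 - (q : ℕ)) * L ^ ((n : ℤ) - 2 - (q : ℕ))))
      - (s : ℝ) * L ^ (-(s : ℤ) - 1) * (∑ q ∈ Finset.range n, hh q * L ^ ((n : ℤ) - 1 - (q : ℕ)))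
      = ∑ q ∈ Finset.range n,
          hh q * (((n : ℝ) - 1 - (q : ℕ) - (s : ℕ)) * L ^ ((n : ℤ) - 2 - (q : ℕ) - (s : ℕ))) := by
    rw [Finset.mul_sum, Finset.mul_sum, ← Finset.sum_sub_distrib]
    refine Finset.sum_congr rfl fun q _ => ?_
    have p1 : L ^ (-(s : ℤ)) * L ^ ((n : ℤ) - 2 - (q : ℕ))
        = L ^ ((n : ℤ) - 2 - (q : ℕ) - (s : ℕ)) := by
      rw [← zpow_add₀ hL]; congr 1; omega
    have p2 : L ^ (-(s : ℤ) - 1) * L ^ ((n : ℤ) - 1 - (q : ℕ))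
        = L ^ ((n : ℤ) - 2 - (q : ℕ) - (s : ℕ)) := by
      rw [← zpow_add₀ hL]; congr 1; omega
    linear_combination (hh q * ((n : ℝ) - 1 - (q : ℕ))) * p1 - (s : ℝ) * hh q * p2
  -- reindexing claims
  have M1 : ∑ q ∈ Finset.range s, cc (s - 1 - q) * (((n : ℝ) - 1 - (q : ℕ)) * L ^ ((n : ℤ) - 2 - (q : ℕ)))
      = ∑ j ∈ Finset.range s,
          cc j * (((n : ℝ) + (j : ℕ) - (s : ℕ)) * L ^ ((n : ℤ) + (j : ℕ) - (s : ℕ) - 1)) := by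
    rw [← Finset.sum_range_reflect
      (fun j => cc j * (((n : ℝ) + (j : ℕ) - (s : ℕ)) * L ^ ((n : ℤ) + (j : ℕ) - (s : ℕ) - 1))) s]
    refine Finset.sum_congr rfl fun q hq => ?_
    have hq' := Finset.mem_range.mp hq
    rw [show (n : ℤ) + ((s - 1 - q : ℕ) : ℤ) - (s : ℕ) - 1 = (n : ℤ) - 2 - (q : ℕ) from by omega,
      show ((s - 1 - q : ℕ) : ℝ) = (s : ℝ) - 1 - (q : ℕ) from by
        rw [Nat.cast_sub (by omega), Nat.cast_sub (by omega)]; push_cast; ring]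
    ring
  have M2 : ∑ q ∈ Finset.Ico s n, hh (q - s) * (((n : ℝ) - 1 - (q : ℕ)) * L ^ ((n : ℤ) - 2 - (q : ℕ)))
      = ∑ q ∈ Finset.range (n - s),
          hh q * (((n : ℝ) - 1 - (q : ℕ) - (s : ℕ)) * L ^ ((n : ℤ) - 2 - (q : ℕ) - (s : ℕ))) := by
    rw [Finset.sum_Ico_eq_sum_range]
    refine Finset.sum_congr rfl fun q hq => ?_
    rw [show s + q - s = q from by omega,
      show ((s + q : ℕ) : ℝ) = (s : ℝ) + (q : ℕ) from by push_cast; ring,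
      show (n : ℤ) - 2 - ((s + q : ℕ) : ℤ) = (n : ℤ) - 2 - (q : ℕ) - (s : ℕ) from by omega]
    ring
  have C1 : ∑ q ∈ Finset.Ico (n - s) n,
        hh q * (((n : ℝ) - 1 - (q : ℕ) - (s : ℕ)) * L ^ ((n : ℤ) - 2 - (q : ℕ) - (s : ℕ)))
      = ∑ j ∈ Finset.range s,
          hh (n - 1 - j) * ((((j : ℕ) : ℝ) - (s : ℕ)) * L ^ (((j : ℕ) : ℤ) - (s : ℕ) - 1)) := by
    rw [Finset.sum_Ico_eq_sum_range, show n - (n - s) = s from by omega,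
      ← Finset.sum_range_reflect
        (fun i => hh (n - s + i) * (((n : ℝ) - 1 - ((n - s + i : ℕ) : ℝ) - (s : ℕ))
          * L ^ ((n : ℤ) - 2 - ((n - s + i : ℕ) : ℤ) - (s : ℕ)))) s]
    refine Finset.sum_congr rfl fun j hj => ?_
    have hj' := Finset.mem_range.mp hj
    rw [show n - s + (s - 1 - j) = n - 1 - j from by omega,
      show (n : ℤ) - 2 - ((n - 1 - j : ℕ) : ℤ) - (s : ℕ) = ((j : ℕ) : ℤ) - (s : ℕ) - 1 from by omega,
      show (n : ℝ) - 1 - ((n - 1 - j : ℕ) : ℝ) - (s : ℕ) = ((j : ℕ) : ℝ) - (s : ℕ) from by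
        rw [Nat.cast_sub (by omega), Nat.cast_sub (by omega)]; push_cast; ring]
  -- the combined sum identity
  have hK : (∑ j ∈ Finset.range N,
        (if s ≤ j then
            cc j * (((n : ℝ) + (j : ℕ) - (s : ℕ)) * L ^ ((n : ℤ) + (j : ℕ) - (s : ℕ) - 1))
          else
            hh (n - 1 - j) * ((((j : ℕ) : ℝ) - (s : ℕ)) * L ^ (((j : ℕ) : ℤ) - (s : ℕ) - 1))))
      + (∑ q ∈ Finset.range n,
          (if q < s then cc (s - 1 - q) else hh (q - s))
            * (((n : ℝ) - 1 - (q : ℕ)) * L ^ ((n : ℤ) - 2 - (q : ℕ))))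
      = (∑ j ∈ Finset.range N,
          cc j * (((n : ℝ) + (j : ℕ) - (s : ℕ)) * L ^ ((n : ℤ) + (j : ℕ) - (s : ℕ) - 1)))
        + ∑ q ∈ Finset.range n,
            hh q * (((n : ℝ) - 1 - (q : ℕ) - (s : ℕ)) * L ^ ((n : ℤ) - 2 - (q : ℕ) - (s : ℕ))) := by
    rw [sum_split N s hsN (fun j =>
        (if s ≤ j then
            cc j * (((n : ℝ) + (j : ℕ) - (s : ℕ)) * L ^ ((n : ℤ) + (j : ℕ) - (s : ℕ) - 1))
          else
            hh (n - 1 - j) * ((((j : ℕ) : ℝ) - (s : ℕ)) * L ^ (((j : ℕ) : ℤ) - (s : ℕ) - 1)))),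
      sum_split n s hsn (fun q =>
        (if q < s then cc (s - 1 - q) else hh (q - s))
          * (((n : ℝ) - 1 - (q : ℕ)) * L ^ ((n : ℤ) - 2 - (q : ℕ)))),
      sum_split N s hsN (fun j =>
        cc j * (((n : ℝ) + (j : ℕ) - (s : ℕ)) * L ^ ((n : ℤ) + (j : ℕ) - (s : ℕ) - 1))),
      sum_split n (n - s) (Nat.sub_le n s) (fun q =>
        hh q * (((n : ℝ) - 1 - (q : ℕ) - (s : ℕ)) * L ^ ((n : ℤ) - 2 - (q : ℕ) - (s : ℕ))))]
    have e1 : ∑ j ∈ Finset.range s,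
        (if s ≤ j then
            cc j * (((n : ℝ) + (j : ℕ) - (s : ℕ)) * L ^ ((n : ℤ) + (j : ℕ) - (s : ℕ) - 1))
          else
            hh (n - 1 - j) * ((((j : ℕ) : ℝ) - (s : ℕ)) * L ^ (((j : ℕ) : ℤ) - (s : ℕ) - 1)))
        = ∑ j ∈ Finset.range s,
            hh (n - 1 - j) * ((((j : ℕ) : ℝ) - (s : ℕ)) * L ^ (((j : ℕ) : ℤ) - (s : ℕ) - 1)) := by
      refine Finset.sum_congr rfl fun j hj => ?_
      rw [if_neg (by have := Finset.mem_range.mp hj; omega)]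
    have e2 : ∑ j ∈ Finset.Ico s N,
        (if s ≤ j then
            cc j * (((n : ℝ) + (j : ℕ) - (s : ℕ)) * L ^ ((n : ℤ) + (j : ℕ) - (s : ℕ) - 1))
          else
            hh (n - 1 - j) * ((((j : ℕ) : ℝ) - (s : ℕ)) * L ^ (((j : ℕ) : ℤ) - (s : ℕ) - 1)))
        = ∑ j ∈ Finset.Ico s N,
            cc j * (((n : ℝ) + (j : ℕ) - (s : ℕ)) * L ^ ((n : ℤ) + (j : ℕ) - (s : ℕ) - 1)) := by
      refine Finset.sum_congr rfl fun j hj => ?_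
      rw [if_pos (Finset.mem_Ico.mp hj).1]
    have e3 : ∑ q ∈ Finset.range s,
        (if q < s then cc (s - 1 - q) else hh (q - s))
          * (((n : ℝ) - 1 - (q : ℕ)) * L ^ ((n : ℤ) - 2 - (q : ℕ)))
        = ∑ q ∈ Finset.range s,
            cc (s - 1 - q) * (((n : ℝ) - 1 - (q : ℕ)) * L ^ ((n : ℤ) - 2 - (q : ℕ))) := by
      refine Finset.sum_congr rfl fun q hq => ?_
      rw [if_pos (Finset.mem_range.mp hq)]
    have e4 : ∑ q ∈ Finset.Ico s n,
        (if q < s then cc (s - 1 - q) else hh (q - s))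
          * (((n : ℝ) - 1 - (q : ℕ)) * L ^ ((n : ℤ) - 2 - (q : ℕ)))
        = ∑ q ∈ Finset.Ico s n,
            hh (q - s) * (((n : ℝ) - 1 - (q : ℕ)) * L ^ ((n : ℤ) - 2 - (q : ℕ))) := by
      refine Finset.sum_congr rfl fun q hq => ?_
      rw [if_neg (by have := (Finset.mem_Ico.mp hq).1; omega)]
    rw [e1, e2, e3, e4, M1, M2, C1]
    ring
  -- zpow bookkeeping
  have z1 : L ^ (s : ℤ) * (L ^ (-(s : ℤ)) * L ^ (-(s : ℤ))) = L ^ (-(s : ℤ)) := by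
    rw [← zpow_add₀ hL, ← zpow_add₀ hL]; congr 1; ring
  have z2 : L ^ ((s : ℤ) - 1) * (L ^ (-(s : ℤ)) * L ^ (-(s : ℤ))) = L ^ (-(s : ℤ) - 1) := by
    rw [← zpow_add₀ hL, ← zpow_add₀ hL]; congr 1; ring
  rw [sub_sub _ (∑ j ∈ Finset.range N, _) _, hK]
  rw [← hA, ← hP] at hK ⊢
  linear_combination (F' * m ^ 2) * z1 + (F * (s : ℝ) * m ^ 2) * z2
    + ((s : ℝ) * L ^ (-(s : ℤ) - 1)) * hrel

end A3aux

open A3aux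

/-- identity (A3) of the paper: for `s ∈ {1,…,N}`,
`(∂h_r^{(s)}/∂λ_p)(M_{0→s}(λ, μ, c))
  = λ_p^{-s} (∂h_r/∂λ_p)(λ, μ, c) + s λ_p^{-s-1} μ_p (∂h_r/∂μ_p)(λ, μ, c)`
on `Ω × ℝⁿ × ℝᴺ`. -/
theorem identity_A3
    (n N : ℕ) (hn : 1 ≤ n) (hN1 : 1 ≤ N) (hNn : N ≤ n)
    (f σ : LaurentPolynomial ℝ) (s : ℕ) (hs1 : 1 ≤ s) (hsN : s ≤ N)
    (H0 Hs : (Fin n → ℝ) → (Fin n → ℝ) → (Fin N → ℝ) → Fin n → ℝ)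
    (hH0 : SepSol n N f σ 0 H0) (hHs : SepSol n N f σ s Hs)
    (lam : Fin n → ℝ) (hlam : lam ∈ Omega n) (mu : Fin n → ℝ) (c : Fin N → ℝ)
    (r p : Fin n) :
    pLam Hs (Mrs n N hn 0 s H0 (lam, mu, c)).1 (Mrs n N hn 0 s H0 (lam, mu, c)).2.1
        (Mrs n N hn 0 s H0 (lam, mu, c)).2.2 r p
      = lam p ^ (-(s : ℤ)) * pLam H0 lam mu c r p
        + (s : ℝ) * lam p ^ (-(s : ℤ) - 1) * mu p * pMu H0 lam mu c r p := by
  classical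
  obtain ⟨h0, hinj⟩ := hlam
  have hL : lam p ≠ 0 := h0 p
  set mubar : Fin n → ℝ := fun i => lam i ^ (-(s : ℤ)) * mu i with hmubar
  set cbar : Fin N → ℝ := fun j =>
    if (j : ℕ) < s then H0 lam mu c ⟨n - 1 - (j : ℕ), by omega⟩ else c j with hcbar
  set cc : ℕ → ℝ := fun j => if h : j < N then c ⟨j, h⟩ else 0 with hcc
  set hh : ℕ → ℝ := fun q => if h : q < n then H0 lam mu c ⟨q, h⟩ else 0 with hhh
  -- Miura projections
  have h2 : (Mrs n N hn 0 s H0 (lam, mu, c)).2.1 = mubar := by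
    funext i
    show lam i ^ (((0 : ℕ) : ℤ) - (s : ℕ)) * mu i = mubar i
    rw [hmubar]
    norm_num
  have h3 : (Mrs n N hn 0 s H0 (lam, mu, c)).2.2 = cbar := by
    funext j
    show (if h : 0 ≤ (j : ℕ) ∧ (j : ℕ) < s then
        H0 lam mu c ⟨n + 0 - (j : ℕ) - 1, by omega⟩ else c j) = cbar j
    simp only [hcbar]
    by_cases hj : (j : ℕ) < s
    · rw [dif_pos ⟨Nat.zero_le _, hj⟩, if_pos hj]
      exact congrArg (H0 lam mu c) (Fin.ext (show n + 0 - (j : ℕ) - 1 = n - 1 - (j : ℕ) by omega))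
    · rw [dif_neg (fun h => hj h.2), if_neg hj]
  -- the value of Hs at the Miura point
  have hbar : Hs lam mubar cbar = (fun q : Fin n =>
      if h : (q : ℕ) < s then c ⟨s - 1 - (q : ℕ), by omega⟩
        else H0 lam mu c ⟨(q : ℕ) - s, by omega⟩) :=
    Hs_at_miura hn hsN hNn hH0 hHs ⟨h0, hinj⟩ mu c
  -- curve-0 separation relation at p, range form
  have hrelp : leval σ (lam p)
      + (∑ j ∈ Finset.range N, cc j * lam p ^ ((n : ℤ) + (j : ℕ)))
      + (∑ q ∈ Finset.range n, hh q * lam p ^ ((n : ℤ) - 1 - (q : ℕ)))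
      = leval f (lam p) * mu p ^ 2 := by
    have hrel0 := hH0 lam ⟨h0, hinj⟩ mu c p
    simp only [Nat.cast_zero, neg_zero, zpow_zero, mul_one, sub_zero, Nat.zero_le,
      if_true] at hrel0
    have hc0 : ∑ j : Fin N, c j * lam p ^ ((n : ℤ) + ((j : ℕ) : ℤ))
        = ∑ j ∈ Finset.range N, cc j * lam p ^ ((n : ℤ) + (j : ℕ)) := by
      rw [← Fin.sum_univ_eq_sum_range (fun j => cc j * lam p ^ ((n : ℤ) + (j : ℕ))) N]
      refine Finset.sum_congr rfl fun j _ => ?_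
      simp only [hcc]
      rw [dif_pos j.isLt, Fin.eta]
    have hh0 : ∑ q : Fin n, H0 lam mu c q * lam p ^ ((n : ℤ) - 1 - (q : ℕ))
        = ∑ q ∈ Finset.range n, hh q * lam p ^ ((n : ℤ) - 1 - (q : ℕ)) := by
      rw [← Fin.sum_univ_eq_sum_range (fun q => hh q * lam p ^ ((n : ℤ) - 1 - (q : ℕ))) n]
      refine Finset.sum_congr rfl fun q _ => ?_
      simp only [hhh]
      rw [dif_pos q.isLt, Fin.eta]
    rw [hc0, hh0] at hrel0
    exact hrel0
  -- conversions of the Fin-indexed sums appearing in the derivative systems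
  have cMbar : ∑ q : Fin n, Hs lam mubar cbar q
        * (((n : ℝ) - 1 - (q : ℕ)) * lam p ^ ((n : ℤ) - 2 - (q : ℕ)))
      = ∑ q ∈ Finset.range n, (if q < s then cc (s - 1 - q) else hh (q - s))
          * (((n : ℝ) - 1 - (q : ℕ)) * lam p ^ ((n : ℤ) - 2 - (q : ℕ))) := by
    rw [← Fin.sum_univ_eq_sum_range (fun q => (if q < s then cc (s - 1 - q) else hh (q - s))
      * (((n : ℝ) - 1 - (q : ℕ)) * lam p ^ ((n : ℤ) - 2 - (q : ℕ)))) n]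
    refine Finset.sum_congr rfl fun q _ => ?_
    have hqn := q.isLt
    congr 1
    refine (congrFun hbar q).trans ?_
    by_cases hq : (q : ℕ) < s
    · rw [dif_pos hq, if_pos hq]
      simp only [hcc]
      rw [dif_pos (show s - 1 - (q : ℕ) < N by omega)]
    · rw [dif_neg hq, if_neg hq]
      simp only [hhh]
      rw [dif_pos (show (q : ℕ) - s < n by omega)]
  have cM0 : ∑ q : Fin n, H0 lam mu c q
        * (((n : ℝ) - 1 - (q : ℕ)) * lam p ^ ((n : ℤ) - 2 - (q : ℕ)))
      = ∑ q ∈ Finset.range n, hh q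
          * (((n : ℝ) - 1 - (q : ℕ)) * lam p ^ ((n : ℤ) - 2 - (q : ℕ))) := by
    rw [← Fin.sum_univ_eq_sum_range (fun q => hh q
      * (((n : ℝ) - 1 - (q : ℕ)) * lam p ^ ((n : ℤ) - 2 - (q : ℕ)))) n]
    refine Finset.sum_congr rfl fun q _ => ?_
    simp only [hhh]
    rw [dif_pos q.isLt, Fin.eta]
  -- conversions of the explicit derivative terms
  have cDBs : DBlam n N f σ s lam mubar cbar p
      = (dleval f (lam p) * lam p ^ (s : ℤ)
            + leval f (lam p) * ((s : ℝ) * lam p ^ ((s : ℤ) - 1)))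
          * (lam p ^ (-(s : ℤ)) * mu p) ^ 2
        - (dleval σ (lam p) * lam p ^ (-(s : ℤ))
            + leval σ (lam p) * (-(s : ℝ) * lam p ^ (-(s : ℤ) - 1)))
        - ∑ j ∈ Finset.range N,
            (if s ≤ j then
                cc j * (((n : ℝ) + (j : ℕ) - (s : ℕ))
                  * lam p ^ ((n : ℤ) + (j : ℕ) - (s : ℕ) - 1))
              else
                hh (n - 1 - j) * ((((j : ℕ) : ℝ) - (s : ℕ))
                  * lam p ^ (((j : ℕ) : ℤ) - (s : ℕ) - 1))) := by
    simp only [DBlam]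
    have hsum : ∑ j : Fin N,
        (if s ≤ (j : ℕ) then
            cbar j * ((((n : ℤ) + (j : ℕ) - (s : ℕ) : ℤ) : ℝ)
              * lam p ^ ((n : ℤ) + (j : ℕ) - (s : ℕ) - 1))
          else
            cbar j * (((((j : ℕ) : ℤ) - (s : ℕ) : ℤ) : ℝ)
              * lam p ^ (((j : ℕ) : ℤ) - (s : ℕ) - 1)))
        = ∑ j ∈ Finset.range N,
            (if s ≤ j then
                cc j * (((n : ℝ) + (j : ℕ) - (s : ℕ))
                  * lam p ^ ((n : ℤ) + (j : ℕ) - (s : ℕ) - 1))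
              else
                hh (n - 1 - j) * ((((j : ℕ) : ℝ) - (s : ℕ))
                  * lam p ^ (((j : ℕ) : ℤ) - (s : ℕ) - 1))) := by
      rw [← Fin.sum_univ_eq_sum_range (fun j =>
        (if s ≤ j then
            cc j * (((n : ℝ) + (j : ℕ) - (s : ℕ))
              * lam p ^ ((n : ℤ) + (j : ℕ) - (s : ℕ) - 1))
          else
            hh (n - 1 - j) * ((((j : ℕ) : ℝ) - (s : ℕ))
              * lam p ^ (((j : ℕ) : ℤ) - (s : ℕ) - 1)))) N]
      refine Finset.sum_congr rfl fun j _ => ?_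
      have hjN := j.isLt
      by_cases hj : s ≤ (j : ℕ)
      · simp only [hcbar, hcc]
        rw [if_pos hj, if_pos hj, if_neg (show ¬((j : ℕ) < s) by omega),
          dif_pos j.isLt, Fin.eta]
        congr 2
        push_cast
        ring
      · simp only [hcbar, hhh]
        rw [if_neg hj, if_neg hj, if_pos (show (j : ℕ) < s by omega),
          dif_pos (show n - 1 - (j : ℕ) < n by omega)]
        congr 2
        push_cast
        ring
    rw [hsum, hmubar]
    congr 1
    push_cast
    ring
  have cDB0 : DBlam n N f σ 0 lam mu c p
      = dleval f (lam p) * mu p ^ 2 - dleval σ (lam p)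
        - ∑ j ∈ Finset.range N,
            cc j * (((n : ℝ) + (j : ℕ)) * lam p ^ ((n : ℤ) + (j : ℕ) - 1)) := by
    simp only [DBlam, Nat.cast_zero, neg_zero, zpow_zero, mul_one, sub_zero, Nat.zero_le,
      if_true, Int.cast_zero, zero_mul, mul_zero, add_zero, neg_zero]
    have hsum : ∑ j : Fin N,
        c j * ((((n : ℤ) + ((j : ℕ) : ℤ) : ℤ) : ℝ) * lam p ^ ((n : ℤ) + ((j : ℕ) : ℤ) - 1))
        = ∑ j ∈ Finset.range N,
            cc j * (((n : ℝ) + (j : ℕ)) * lam p ^ ((n : ℤ) + (j : ℕ) - 1)) := by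
      rw [← Fin.sum_univ_eq_sum_range (fun j =>
        cc j * (((n : ℝ) + (j : ℕ)) * lam p ^ ((n : ℤ) + (j : ℕ) - 1))) N]
      refine Finset.sum_congr rfl fun j _ => ?_
      simp only [hcc]
      rw [dif_pos j.isLt, Fin.eta]
      congr 2
      push_cast
      ring
    rw [hsum]
  -- the two sides solve the same linear system
  have hsys : ∀ i : Fin n,
      ∑ q : Fin n, pLam Hs lam mubar cbar q p * lam i ^ ((n : ℤ) - 1 - (q : ℕ))
        = ∑ q : Fin n, (lam p ^ (-(s : ℤ)) * pLam H0 lam mu c q p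
            + (s : ℝ) * lam p ^ (-(s : ℤ) - 1) * mu p * pMu H0 lam mu c q p)
              * lam i ^ ((n : ℤ) - 1 - (q : ℕ)) := by
    intro i
    have Sb := deriv_system_lam hHs ⟨h0, hinj⟩ mubar cbar p i
    have S0 := deriv_system_lam hH0 ⟨h0, hinj⟩ mu c p i
    have T0 := deriv_system_mu hH0 ⟨h0, hinj⟩ mu c p i
    simp only [Nat.cast_zero, zpow_zero, mul_one] at T0
    have hw : ∑ q : Fin n, (lam p ^ (-(s : ℤ)) * pLam H0 lam mu c q p
          + (s : ℝ) * lam p ^ (-(s : ℤ) - 1) * mu p * pMu H0 lam mu c q p)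
            * lam i ^ ((n : ℤ) - 1 - (q : ℕ))
        = lam p ^ (-(s : ℤ))
            * (∑ q : Fin n, pLam H0 lam mu c q p * lam i ^ ((n : ℤ) - 1 - (q : ℕ)))
          + (s : ℝ) * lam p ^ (-(s : ℤ) - 1) * mu p
            * (∑ q : Fin n, pMu H0 lam mu c q p * lam i ^ ((n : ℤ) - 1 - (q : ℕ))) := by
      rw [Finset.mul_sum, Finset.mul_sum, ← Finset.sum_add_distrib]
      refine Finset.sum_congr rfl fun q _ => ?_
      ring
    rw [hw]
    rcases eq_or_ne i p with rfl | hip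
    · rw [if_pos rfl, if_pos rfl] at Sb S0
      rw [if_pos rfl] at T0
      have eb : ∑ q : Fin n, pLam Hs lam mubar cbar q i * lam i ^ ((n : ℤ) - 1 - (q : ℕ))
          = DBlam n N f σ s lam mubar cbar i
            - ∑ q : Fin n, Hs lam mubar cbar q
                * (((n : ℝ) - 1 - (q : ℕ)) * lam i ^ ((n : ℤ) - 2 - (q : ℕ))) := by
        linarith [Sb]
      have e0 : ∑ q : Fin n, pLam H0 lam mu c q i * lam i ^ ((n : ℤ) - 1 - (q : ℕ))
          = DBlam n N f σ 0 lam mu c i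
            - ∑ q : Fin n, H0 lam mu c q
                * (((n : ℝ) - 1 - (q : ℕ)) * lam i ^ ((n : ℤ) - 2 - (q : ℕ))) := by
        linarith [S0]
      rw [eb, e0, T0, cDBs, cDB0, cMbar, cM0]
      have key := key_identity hn hsN hNn hL cc hh hrelp
        (F := leval f (lam i)) (F' := dleval f (lam i)) (S := leval σ (lam i))
        (S' := dleval σ (lam i)) (m := mu i)
      linear_combination key
    · rw [if_neg hip, if_neg hip] at Sb S0
      rw [if_neg hip] at T0
      rw [T0]
      have eb : ∑ q : Fin n, pLam Hs lam mubar cbar q p * lam i ^ ((n : ℤ) - 1 - (q : ℕ)) = 0 := by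
        linarith [Sb]
      have e0 : ∑ q : Fin n, pLam H0 lam mu c q p * lam i ^ ((n : ℤ) - 1 - (q : ℕ)) = 0 := by
        linarith [S0]
      rw [eb, e0]
      ring
  -- conclude via invertibility of the Vandermonde system
  have hvw : (fun q : Fin n => pLam Hs lam mubar cbar q p)
      = fun q : Fin n => lam p ^ (-(s : ℤ)) * pLam H0 lam mu c q p
          + (s : ℝ) * lam p ^ (-(s : ℤ) - 1) * mu p * pMu H0 lam mu c q p := by
    apply system_unique hinj
    funext i
    simp only [Matrix.mulVec, dotProduct, Vm, Matrix.of_apply]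
    have conv : ∀ (v : Fin n → ℝ),
        ∑ q : Fin n, lam i ^ (n - 1 - (q : ℕ)) * v q
          = ∑ q : Fin n, v q * lam i ^ ((n : ℤ) - 1 - (q : ℕ)) := by
      intro v
      refine Finset.sum_congr rfl fun q _ => ?_
      rw [A3aux.zpow_eq_pow]
      ring
    rw [conv, conv, hsys i]
  rw [h2, h3]
  exact congrFun hvw r
end
end

section
/- For every (λ, μ, c) ∈ Ω × ℝⁿ × ℝᴺ and all r, p ∈ {1,…,n}, the curve-0 Hamiltonians satisfy (∂h_r/∂λ_p)(λ, μ, c) = (−1)^{r+1} e_{r−1}(λ̂_p) · (1/Δ_p) · ( f′(λ_p) μ_p² − σ′(λ_p) − Σ_{k=1}^{N} (n+k−1) c_k λ_p^{n+k−2} − Σ_{k=1}^{n} (n−k) h_k(λ, μ, c) λ_p^{n−k−1} ), where f′ and σ′ are the derivatives of the Laurent polynomials f and σ, e_m denotes the m-th elementary symmetric polynomial (e_0 = 1), and e_{r−1}(λ̂_p) := e_{r−1}(λ_1,…,λ_{p−1},λ_{p+1},…,λ_n). -/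
open Finset Function

noncomputable section

/-- The `k`-th elementary symmetric polynomial of the values of `lam` on the finset `s`
(`e_0 = 1`). -/
def esym {n : ℕ} (s : Finset (Fin n)) (lam : Fin n → ℝ) (k : ℕ) : ℝ :=
  ∑ t ∈ Finset.powersetCard k s, ∏ i ∈ t, lam i

/-- `Δ_i = ∏_{k ≠ i} (λ_i - λ_k)`. -/
def Delt {n : ℕ} (lam : Fin n → ℝ) (i : Fin n) : ℝ :=
  ∏ k ∈ Finset.univ.erase i, (lam i - lam k)

variable {n : ℕ}

lemma esym_zero (s : Finset (Fin n)) (lam : Fin n → ℝ) : esym s lam 0 = 1 := by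
  simp [esym]

lemma esym_of_card_lt {s : Finset (Fin n)} {k : ℕ} (h : s.card < k) (lam : Fin n → ℝ) :
    esym s lam k = 0 := by
  rw [esym, Finset.powersetCard_eq_empty.2 h, Finset.sum_empty]

lemma esym_insert {a : Fin n} {s : Finset (Fin n)} (h : a ∉ s) (lam : Fin n → ℝ) (k : ℕ) :
    esym (insert a s) lam (k + 1) = esym s lam (k + 1) + lam a * esym s lam k := by
  rw [esym, Finset.powersetCard_succ_insert h, Finset.sum_union, Finset.sum_image]
  · rw [esym, esym, Finset.mul_sum]
    congr 1
    refine Finset.sum_congr rfl fun t ht => ?_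
    rw [Finset.mem_powersetCard] at ht
    rw [Finset.prod_insert (fun hc => h (ht.1 hc))]
  · intro t ht u hu htu
    rw [Finset.mem_coe, Finset.mem_powersetCard] at ht hu
    have : ∀ v : Finset (Fin n), v ⊆ s → (insert a v).erase a = v := fun v hv => by
      rw [Finset.erase_insert_eq_erase, Finset.erase_eq_of_notMem (fun hc => h (hv hc))]
    rw [← this t ht.1, ← this u hu.1, htu]
  · rw [Finset.disjoint_left]
    intro t ht hti
    rw [Finset.mem_powersetCard] at ht
    rw [Finset.mem_image] at hti
    obtain ⟨u, hu, rfl⟩ := hti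
    exact h (ht.1 (Finset.mem_insert_self a u))

lemma vieta (s : Finset (Fin n)) (lam : Fin n → ℝ) (x : ℝ) :
    ∏ k ∈ s, (x - lam k)
      = ∑ j ∈ Finset.range (s.card + 1), (-1) ^ j * esym s lam j * x ^ (s.card - j) := by
  induction s using Finset.induction_on with
  | empty => simp [esym_zero]
  | @insert a s ha ih =>
    rw [Finset.prod_insert ha, ih, Finset.card_insert_of_notMem ha]
    set m := s.card with hm
    have key : ∑ j ∈ Finset.range (m + 1 + 1),
        (-1) ^ j * esym (insert a s) lam j * x ^ (m + 1 - j)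
        = x ^ (m + 1) + ∑ j ∈ Finset.range (m + 1),
            (-1) ^ (j + 1) * (esym s lam (j + 1) + lam a * esym s lam j) * x ^ (m - j) := by
      rw [Finset.sum_range_succ']
      simp only [esym_zero, pow_zero, one_mul, mul_one, Nat.sub_zero]
      rw [add_comm]
      congr 1
      refine Finset.sum_congr rfl fun j hj => ?_
      rw [Finset.mem_range] at hj
      rw [esym_insert ha]
      congr 2
      omega
    rw [key, sub_mul, Finset.mul_sum, Finset.mul_sum]
    have h1 : ∑ j ∈ Finset.range (m + 1), x * ((-1) ^ j * esym s lam j * x ^ (m - j))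
        = x ^ (m + 1) + ∑ j ∈ Finset.range (m + 1), (-1) ^ (j + 1) * esym s lam (j + 1) * x ^ (m - j) := by
      have h2 : ∑ j ∈ Finset.range (m + 1), x * ((-1) ^ j * esym s lam j * x ^ (m - j))
          = ∑ j ∈ Finset.range (m + 1), (-1) ^ j * esym s lam j * x ^ (m + 1 - j) := by
        refine Finset.sum_congr rfl fun j hj => ?_
        rw [Finset.mem_range] at hj
        have : m + 1 - j = (m - j) + 1 := by omega
        rw [this, pow_succ]
        ring
      rw [h2, Finset.sum_range_succ']
      have h3 : ∑ j ∈ Finset.range (m + 1), (-1:ℝ) ^ (j + 1) * esym s lam (j + 1) * x ^ (m - j)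
          = ∑ j ∈ Finset.range m, (-1) ^ (j + 1) * esym s lam (j + 1) * x ^ (m - j) := by
        rw [Finset.sum_range_succ, esym_of_card_lt (Nat.lt_succ_self m) lam]
        simp
      rw [h3]
      simp only [esym_zero, pow_zero, one_mul, mul_one, Nat.sub_zero]
      rw [add_comm]
      congr 1
      refine Finset.sum_congr rfl fun j hj => ?_
      rw [Finset.mem_range] at hj
      congr 2
      omega
    rw [h1, add_sub_assoc, ← Finset.sum_sub_distrib]
    congr 1
    refine Finset.sum_congr rfl fun j hj => ?_
    ring
lemma Delt_ne_zero {lam : Fin n → ℝ} (hinj : Function.Injective lam) (i : Fin n) :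
    Delt lam i ≠ 0 := by
  refine Finset.prod_ne_zero_iff.2 fun k hk => ?_
  rw [Finset.mem_erase] at hk
  exact sub_ne_zero_of_ne (fun hc => hk.1 (hinj hc).symm)

lemma lagrange_delta {lam : Fin n → ℝ} (hinj : Function.Injective lam) (i i' : Fin n) :
    ∑ q : Fin n, (-1 : ℝ) ^ (q : ℕ) * esym (Finset.univ.erase i') lam (q : ℕ)
        * lam i ^ (n - 1 - (q : ℕ))
      = if i = i' then Delt lam i' else 0 := by
  have hn : 1 ≤ n := i'.pos
  have hcard : (Finset.univ.erase i').card = n - 1 := by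
    rw [Finset.card_erase_of_mem (Finset.mem_univ i'), Finset.card_univ, Fintype.card_fin]
  have hv := vieta (Finset.univ.erase i') lam (lam i)
  rw [hcard] at hv
  have hrange : n - 1 + 1 = n := by omega
  rw [hrange] at hv
  rw [Fin.sum_univ_eq_sum_range
    (fun q => (-1 : ℝ) ^ q * esym (Finset.univ.erase i') lam q * lam i ^ (n - 1 - q)), ← hv]
  by_cases h : i = i'
  · subst h
    simp [Delt]
  · rw [if_neg h]
    refine Finset.prod_eq_zero (Finset.mem_erase.2 ⟨h, Finset.mem_univ i⟩) ?_
    ring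

/-- The Vandermonde-type matrix of the separation relations. -/
def Amat (lam : Fin n → ℝ) : Matrix (Fin n) (Fin n) ℝ :=
  fun i q => lam i ^ (n - 1 - (q : ℕ))

/-- Its explicit inverse. -/
def Wmat (lam : Fin n → ℝ) : Matrix (Fin n) (Fin n) ℝ :=
  fun q i => (-1 : ℝ) ^ (q : ℕ) * esym (Finset.univ.erase i) lam (q : ℕ) / Delt lam i

lemma AW {lam : Fin n → ℝ} (hinj : Function.Injective lam) :
    Amat lam * Wmat lam = 1 := by
  ext i i'
  rw [Matrix.mul_apply]
  have : ∀ q : Fin n, Amat lam i q * Wmat lam q i'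
      = ((-1 : ℝ) ^ (q : ℕ) * esym (Finset.univ.erase i') lam (q : ℕ)
          * lam i ^ (n - 1 - (q : ℕ))) / Delt lam i' := by
    intro q; rw [Amat, Wmat]; ring
  rw [Finset.sum_congr rfl fun q _ => this q, ← Finset.sum_div, lagrange_delta hinj]
  by_cases h : i = i'
  · subst h
    rw [if_pos rfl, div_self (Delt_ne_zero hinj i), Matrix.one_apply_eq]
  · rw [if_neg h, zero_div, Matrix.one_apply_ne h]

lemma WA {lam : Fin n → ℝ} (hinj : Function.Injective lam) :
    Wmat lam * Amat lam = 1 :=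
  mul_eq_one_comm.mp (AW hinj)
open Matrix

/-- The right-hand side of the (rearranged) curve-0 separation relations. -/
def Gv {N : ℕ} (f σ : LaurentPolynomial ℝ) (lam mu : Fin n → ℝ) (c : Fin N → ℝ)
    (i : Fin n) : ℝ :=
  leval f (lam i) * mu i ^ 2 - leval σ (lam i) - ∑ j : Fin N, c j * lam i ^ ((n : ℤ) + (j : ℕ))

lemma zpow_exp_eq {x : ℝ} (q : Fin n) : x ^ ((n : ℤ) - 1 - (q : ℕ)) = x ^ (n - 1 - (q : ℕ)) := by
  have h : (n : ℤ) - 1 - (q : ℕ) = ((n - 1 - (q : ℕ) : ℕ) : ℤ) := by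
    have := q.isLt; omega
  rw [h, zpow_natCast]

lemma sep_system {N : ℕ} {f σ : LaurentPolynomial ℝ}
    {H : (Fin n → ℝ) → (Fin n → ℝ) → (Fin N → ℝ) → Fin n → ℝ}
    (hH : SepSol n N f σ 0 H) {lam : Fin n → ℝ} (hlam : lam ∈ Omega n)
    (mu : Fin n → ℝ) (c : Fin N → ℝ) :
    Amat lam *ᵥ H lam mu c = Gv f σ lam mu c := by
  funext i
  have h := hH lam hlam mu c i
  simp only [Nat.cast_zero, neg_zero, zpow_zero, mul_one, Nat.zero_le, if_true,
    sub_zero, Nat.cast_ofNat] at h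
  have hsum : ∑ q : Fin n, H lam mu c q * lam i ^ ((n : ℤ) - 1 - (q : ℕ))
      = ∑ q : Fin n, H lam mu c q * lam i ^ (n - 1 - (q : ℕ)) :=
    Finset.sum_congr rfl fun q _ => by rw [zpow_exp_eq]
  rw [hsum] at h
  have : (Amat lam *ᵥ H lam mu c) i = ∑ q : Fin n, H lam mu c q * lam i ^ (n - 1 - (q : ℕ)) := by
    rw [Matrix.mulVec, dotProduct]
    exact Finset.sum_congr rfl fun q _ => by rw [Amat]; ring
  rw [this, Gv]
  linarith [h]

lemma H_eq {N : ℕ} {f σ : LaurentPolynomial ℝ}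
    {H : (Fin n → ℝ) → (Fin n → ℝ) → (Fin N → ℝ) → Fin n → ℝ}
    (hH : SepSol n N f σ 0 H) {lam : Fin n → ℝ} (hlam : lam ∈ Omega n)
    (mu : Fin n → ℝ) (c : Fin N → ℝ) :
    H lam mu c = Wmat lam *ᵥ Gv f σ lam mu c := by
  have h1 : Wmat lam *ᵥ (Amat lam *ᵥ H lam mu c) = Wmat lam *ᵥ Gv f σ lam mu c := by
    rw [sep_system hH hlam mu c]
  rwa [Matrix.mulVec_mulVec, WA hlam.2, Matrix.one_mulVec] at h1
lemma leval_differentiableAt (p : LaurentPolynomial ℝ) {x : ℝ} (hx : x ≠ 0) :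
    DifferentiableAt ℝ (leval p) x := by
  have : leval p = fun y => ∑ k ∈ p.coeff.support, p.coeff k * y ^ k := by
    funext y; rfl
  rw [this]
  exact DifferentiableAt.fun_sum fun k _ =>
    ((differentiableAt_zpow.2 (Or.inl hx)).const_mul _)

lemma update_mem_nhds {lam : Fin n → ℝ} (hlam : lam ∈ Omega n) (p : Fin n) :
    ∀ᶠ t in nhds (lam p), Function.update lam p t ∈ Omega n := by
  classical
  set S : Finset ℝ := insert 0 ((Finset.univ.erase p).image lam) with hS
  have hopen : IsOpen ((S : Set ℝ))ᶜ := (Set.Finite.isClosed (S.finite_toSet)).isOpen_compl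
  have hmemS : lam p ∉ S := by
    simp only [hS, Finset.mem_insert, Finset.mem_image, Finset.mem_erase, not_or]
    refine ⟨hlam.1 p, ?_⟩
    rintro ⟨k, ⟨hkp, -⟩, hk⟩
    exact hkp (hlam.2 hk)
  have hmem : lam p ∈ ((S : Set ℝ))ᶜ := by
    simpa only [Set.mem_compl_iff, Finset.mem_coe] using hmemS
  filter_upwards [hopen.mem_nhds hmem] with t ht
  rw [Set.mem_compl_iff, Finset.mem_coe] at ht
  simp only [hS, Finset.mem_insert, Finset.mem_image, Finset.mem_erase, not_or] at ht
  obtain ⟨ht0, htl⟩ := ht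
  constructor
  · intro i
    rcases eq_or_ne i p with rfl | hip
    · rwa [Function.update_self]
    · rw [Function.update_of_ne hip]; exact hlam.1 i
  · intro i j hij
    by_cases hip : i = p <;> by_cases hjp : j = p
    · rw [hip, hjp]
    · rw [hip, Function.update_self, Function.update_of_ne hjp] at hij
      exact absurd ⟨j, ⟨hjp, Finset.mem_univ j⟩, hij.symm⟩ htl
    · rw [hjp, Function.update_self, Function.update_of_ne hip] at hij
      exact absurd ⟨i, ⟨hip, Finset.mem_univ i⟩, hij⟩ htl
    · rw [Function.update_of_ne hip, Function.update_of_ne hjp] at hij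
      exact hlam.2 hij

lemma update_coord_differentiable (lam : Fin n → ℝ) (p i : Fin n) :
    Differentiable ℝ (fun t => Function.update lam p t i) := by
  rcases eq_or_ne i p with rfl | hip
  · simpa only [Function.update_self] using differentiable_fun_id
  · simp only [Function.update_of_ne hip]
    exact differentiable_const _

lemma update_coord_hasDerivAt (lam : Fin n → ℝ) (p i : Fin n) (t : ℝ) :
    HasDerivAt (fun t => Function.update lam p t i) (if i = p then 1 else 0) t := by
  rcases eq_or_ne i p with rfl | hip
  · simp only [Function.update_self, if_pos rfl]
    exact hasDerivAt_id t
  · simp only [Function.update_of_ne hip, if_neg hip]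
    exact hasDerivAt_const t _

lemma mulVec_apply' (M : Matrix (Fin n) (Fin n) ℝ) (v : Fin n → ℝ) (q : Fin n) :
    (M *ᵥ v) q = ∑ i, M q i * v i := rfl

lemma comp_update_differentiableAt {g : ℝ → ℝ} {lam : Fin n → ℝ} {p i : Fin n}
    (hg : DifferentiableAt ℝ g (lam i)) :
    DifferentiableAt ℝ (fun t => g (Function.update lam p t i)) (lam p) := by
  have h1 : DifferentiableAt ℝ g ((fun t => Function.update lam p t i) (lam p)) := by
    simpa only [Function.update_eq_self] using hg
  simpa only [Function.comp_def] using
    h1.comp (lam p) (update_coord_differentiable lam p i).differentiableAt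

/-- `(∂h_r/∂λ_p)(λ, μ, c) = (-1)^{r+1} e_{r-1}(λ̂_p) (1/Δ_p)
( f′(λ_p) μ_p² - σ′(λ_p) - Σ_{k=1}^{N} (n+k-1) c_k λ_p^{n+k-2}
  - Σ_{k=1}^{n} (n-k) h_k λ_p^{n-k-1} )` for the curve-0 Hamiltonians
(1-based `r, k`; 0-based below). -/
theorem dh_dlam_formula
    (n N : ℕ) (hn : 1 ≤ n) (hN1 : 1 ≤ N) (hNn : N ≤ n)
    (f σ : LaurentPolynomial ℝ)
    (H : (Fin n → ℝ) → (Fin n → ℝ) → (Fin N → ℝ) → Fin n → ℝ)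
    (hH : SepSol n N f σ 0 H)
    (lam : Fin n → ℝ) (hlam : lam ∈ Omega n) (mu : Fin n → ℝ) (c : Fin N → ℝ)
    (r p : Fin n) :
    pLam H lam mu c r p
      = (-1 : ℝ) ^ (r : ℕ) * esym (Finset.univ.erase p) lam (r : ℕ) * (1 / Delt lam p) *
          (deriv (leval f) (lam p) * mu p ^ 2 - deriv (leval σ) (lam p)
            - (∑ k : Fin N, ((n : ℝ) + (k : ℕ)) * c k * lam p ^ ((n : ℤ) + (k : ℕ) - 1))
            - ∑ k : Fin n, ((n : ℝ) - ((k : ℕ) + 1)) * H lam mu c k *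
                lam p ^ ((n : ℤ) - (k : ℕ) - 2)) := by
  classical
  obtain ⟨hne, hinj⟩ := id hlam
  have hx : lam p ≠ 0 := hne p
  have hux : Function.update lam p (lam p) = lam := Function.update_eq_self p lam
  -- the explicit solution, as a function of the p-th coordinate
  set φ : Fin n → ℝ → ℝ := fun q t =>
    ∑ i, Wmat (Function.update lam p t) q i * Gv f σ (Function.update lam p t) mu c i
    with hφdef
  -- differentiability of φ
  have hφdiff : ∀ q, DifferentiableAt ℝ (φ q) (lam p) := by
    intro q
    rw [hφdef]
    refine DifferentiableAt.fun_sum fun i _ => DifferentiableAt.fun_mul ?_ ?_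
    · simp only [Wmat]
      refine DifferentiableAt.fun_div (DifferentiableAt.const_mul ?_ _) ?_ ?_
      · simp only [esym]
        exact DifferentiableAt.fun_sum fun t' _ => DifferentiableAt.fun_finsetProd fun k _ =>
          (update_coord_differentiable lam p k).differentiableAt
      · simp only [Delt]
        exact DifferentiableAt.fun_finsetProd fun k _ =>
          ((update_coord_differentiable lam p i).differentiableAt.sub
            (update_coord_differentiable lam p k).differentiableAt)
      · rw [hux]
        exact Delt_ne_zero hinj i
    · simp only [Gv]
      refine DifferentiableAt.sub (DifferentiableAt.sub ?_ ?_) ?_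
      · exact (comp_update_differentiableAt (leval_differentiableAt f (hne i))).mul_const _
      · exact comp_update_differentiableAt (leval_differentiableAt σ (hne i))
      · refine DifferentiableAt.fun_sum fun j _ => DifferentiableAt.const_mul ?_ _
        exact comp_update_differentiableAt (g := fun y => y ^ ((n : ℤ) + (j : ℕ)))
          (differentiableAt_zpow.2 (Or.inl (hne i)))
  set d : Fin n → ℝ := fun q => deriv (φ q) (lam p) with hd_def
  have hdAt : ∀ q, HasDerivAt (φ q) (d q) (lam p) := fun q => (hφdiff q).hasDerivAt
  -- value of φ at the base point
  have hφx : ∀ q, φ q (lam p) = H lam mu c q := by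
    intro q
    rw [hφdef]
    show ∑ i, Wmat (Function.update lam p (lam p)) q i
        * Gv f σ (Function.update lam p (lam p)) mu c i = _
    rw [hux, H_eq hH hlam mu c]
    exact (mulVec_apply' _ _ q).symm
  -- the eventual separation system for φ
  have hev : ∀ᶠ t in nhds (lam p), ∀ i,
      ∑ q, φ q t * (Function.update lam p t i) ^ (n - 1 - (q : ℕ))
        = Gv f σ (Function.update lam p t) mu c i := by
    filter_upwards [update_mem_nhds hlam p] with t ht i
    have h1 : Amat (Function.update lam p t) *ᵥ
        (Wmat (Function.update lam p t) *ᵥ Gv f σ (Function.update lam p t) mu c)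
        = Gv f σ (Function.update lam p t) mu c := by
      rw [Matrix.mulVec_mulVec, AW ht.2, Matrix.one_mulVec]
    calc ∑ q, φ q t * (Function.update lam p t i) ^ (n - 1 - (q : ℕ))
        = ∑ q, Amat (Function.update lam p t) i q *
            ((Wmat (Function.update lam p t) *ᵥ Gv f σ (Function.update lam p t) mu c) q) := by
          refine Finset.sum_congr rfl fun q _ => ?_
          rw [Amat, mulVec_apply', hφdef]
          ring
      _ = Gv f σ (Function.update lam p t) mu c i := by
          rw [← mulVec_apply', h1]
  -- derivative of the power factors
  set Pfun : Fin n → Fin n → ℝ := fun i q =>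
    if i = p then ((n - 1 - (q : ℕ) : ℕ) : ℝ) * lam p ^ (n - 1 - (q : ℕ) - 1) else 0
    with hP_def
  have hpow : ∀ (i : Fin n) (q : Fin n),
      HasDerivAt (fun t => (Function.update lam p t i) ^ (n - 1 - (q : ℕ)))
      (Pfun i q) (lam p) := by
    intro i q
    by_cases hip : i = p
    · have hPval : Pfun i q = ((n - 1 - (q : ℕ) : ℕ) : ℝ) * lam p ^ (n - 1 - (q : ℕ) - 1) := by
        rw [hP_def]; simp [hip]
      have hfun : (fun t => (Function.update lam p t i) ^ (n - 1 - (q : ℕ)))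
          = fun t => t ^ (n - 1 - (q : ℕ)) :=
        funext fun t => by rw [hip, Function.update_self]
      rw [hPval, hfun]
      exact hasDerivAt_pow _ _
    · have hPval : Pfun i q = 0 := by rw [hP_def]; simp [hip]
      have hfun : (fun t => (Function.update lam p t i) ^ (n - 1 - (q : ℕ)))
          = fun _ => lam i ^ (n - 1 - (q : ℕ)) :=
        funext fun t => by rw [Function.update_of_ne hip]
      rw [hPval, hfun]
      exact hasDerivAt_const _ _
  -- derivative of the left-hand sides
  have hLd : ∀ i, HasDerivAt
      (fun t => ∑ q, φ q t * (Function.update lam p t i) ^ (n - 1 - (q : ℕ)))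
      (∑ q, (d q * lam i ^ (n - 1 - (q : ℕ)) + H lam mu c q * Pfun i q)) (lam p) := by
    intro i
    have h := HasDerivAt.fun_sum (u := Finset.univ)
      (fun q _ => (hdAt q).fun_mul (hpow i q))
    have hval : ∑ q, (d q * Function.update lam p (lam p) i ^ (n - 1 - (q : ℕ))
        + φ q (lam p) * Pfun i q)
        = ∑ q, (d q * lam i ^ (n - 1 - (q : ℕ)) + H lam mu c q * Pfun i q) := by
      refine Finset.sum_congr rfl fun q _ => ?_
      rw [hux, hφx]
    rwa [hval] at h
  -- derivative of the right-hand sides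
  set S0 : ℝ := deriv (leval f) (lam p) * mu p ^ 2 - deriv (leval σ) (lam p)
    - ∑ j : Fin N, c j * ((((n : ℤ) + (j : ℕ) : ℤ) : ℝ) * lam p ^ ((n : ℤ) + (j : ℕ) - 1))
    with hS0_def
  set Rv : Fin n → ℝ := fun i => if i = p then S0 else 0 with hR_def
  have hRd : ∀ i, HasDerivAt (fun t => Gv f σ (Function.update lam p t) mu c i)
      (Rv i) (lam p) := by
    intro i
    by_cases hip : i = p
    · have hRval : Rv i = S0 := by rw [hR_def]; simp [hip]
      have hfun : (fun t => Gv f σ (Function.update lam p t) mu c i)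
          = fun t => leval f t * mu p ^ 2 - leval σ t
              - ∑ j : Fin N, c j * t ^ ((n : ℤ) + (j : ℕ)) := by
        funext t
        rw [hip]
        simp [Gv, Function.update_self]
      rw [hRval, hfun, hS0_def]
      exact (((leval_differentiableAt f hx).hasDerivAt.mul_const _).sub
        (leval_differentiableAt σ hx).hasDerivAt).sub
        (HasDerivAt.fun_sum fun j _ => ((hasDerivAt_zpow _ _ (Or.inl hx)).const_mul _))
    · have hRval : Rv i = 0 := by rw [hR_def]; simp [hip]
      have hfun : (fun t => Gv f σ (Function.update lam p t) mu c i)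
          = fun _ => Gv f σ lam mu c i := by
        funext t
        simp [Gv, Function.update_of_ne hip]
      rw [hRval, hfun]
      exact hasDerivAt_const _ _
  -- the linear system satisfied by d
  have hsys : ∀ i, ∑ q, d q * lam i ^ (n - 1 - (q : ℕ))
      + ∑ q, H lam mu c q * Pfun i q = Rv i := by
    intro i
    have hcongr : (fun t => Gv f σ (Function.update lam p t) mu c i)
        =ᶠ[nhds (lam p)]
        (fun t => ∑ q, φ q t * (Function.update lam p t i) ^ (n - 1 - (q : ℕ))) :=
      hev.mono fun t ht => (ht i).symm
    have h2 := (hLd i).congr_of_eventuallyEq hcongr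
    have h3 := h2.unique (hRd i)
    rw [← h3, Finset.sum_add_distrib]
  set v : Fin n → ℝ := fun i => Rv i - ∑ q, H lam mu c q * Pfun i q with hv_def
  have hAd : Amat lam *ᵥ d = v := by
    funext i
    rw [mulVec_apply']
    simp only [hv_def]
    have : ∑ q, Amat lam i q * d q = ∑ q, d q * lam i ^ (n - 1 - (q : ℕ)) :=
      Finset.sum_congr rfl fun q _ => by rw [Amat]; ring
    rw [this]
    have := hsys i
    linarith
  have hdW : d = Wmat lam *ᵥ v := by
    have h1 : Wmat lam *ᵥ (Amat lam *ᵥ d) = Wmat lam *ᵥ v := by rw [hAd]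
    rwa [Matrix.mulVec_mulVec, WA hinj, Matrix.one_mulVec] at h1
  have hdr : d r = Wmat lam r p * v p := by
    rw [congrFun hdW r, mulVec_apply']
    refine Finset.sum_eq_single p (fun i _ hip => ?_) (fun h => absurd (Finset.mem_univ p) h)
    have hvi : v i = 0 := by
      simp only [hv_def, hR_def, hP_def, if_neg hip]
      simp
    rw [hvi, mul_zero]
  -- identify pLam with d r
  have hplam : pLam H lam mu c r p = d r := by
    rw [pLam, hd_def]
    refine Filter.EventuallyEq.deriv_eq ?_
    filter_upwards [update_mem_nhds hlam p] with t ht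
    rw [congrFun (H_eq hH ht mu c) r, hφdef]
    exact mulVec_apply' _ _ r
  rw [hplam, hdr]
  -- final algebraic identification
  have hvp : v p = deriv (leval f) (lam p) * mu p ^ 2 - deriv (leval σ) (lam p)
      - (∑ k : Fin N, ((n : ℝ) + (k : ℕ)) * c k * lam p ^ ((n : ℤ) + (k : ℕ) - 1))
      - ∑ k : Fin n, ((n : ℝ) - ((k : ℕ) + 1)) * H lam mu c k *
          lam p ^ ((n : ℤ) - (k : ℕ) - 2) := by
    simp only [hv_def, hR_def, hP_def, hS0_def, eq_self_iff_true, if_true]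
    have hc : ∑ j : Fin N, c j * ((((n : ℤ) + (j : ℕ) : ℤ) : ℝ) * lam p ^ ((n : ℤ) + (j : ℕ) - 1))
        = ∑ k : Fin N, ((n : ℝ) + (k : ℕ)) * c k * lam p ^ ((n : ℤ) + (k : ℕ) - 1) := by
      refine Finset.sum_congr rfl fun j _ => ?_
      push_cast
      ring
    have hh : ∑ q : Fin n, H lam mu c q *
        (((n - 1 - (q : ℕ) : ℕ) : ℝ) * lam p ^ (n - 1 - (q : ℕ) - 1))
        = ∑ k : Fin n, ((n : ℝ) - ((k : ℕ) + 1)) * H lam mu c k *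
            lam p ^ ((n : ℤ) - (k : ℕ) - 2) := by
      refine Finset.sum_congr rfl fun q _ => ?_
      by_cases hq : (q : ℕ) + 1 = n
      · have h1 : n - 1 - (q : ℕ) = 0 := by omega
        have h2 : (n : ℝ) - ((q : ℕ) + 1) = 0 := by
          have hcast : ((q : ℕ) : ℝ) + 1 = (n : ℝ) := by exact_mod_cast congrArg (Nat.cast (R := ℝ)) hq
          linarith
        rw [h1, h2]
        simp
      · have hlt : (q : ℕ) + 2 ≤ n := by have := q.isLt; omega
        have h1 : ((n - 1 - (q : ℕ) : ℕ) : ℝ) = (n : ℝ) - ((q : ℕ) + 1) := by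
          rw [show n - 1 - (q : ℕ) = n - ((q : ℕ) + 1) from by omega,
            Nat.cast_sub (by omega)]
          push_cast
          ring
        have h2 : lam p ^ ((n : ℤ) - (q : ℕ) - 2) = lam p ^ (n - 1 - (q : ℕ) - 1) := by
          rw [show (n : ℤ) - (q : ℕ) - 2 = ((n - 1 - (q : ℕ) - 1 : ℕ) : ℤ) from by omega,
            zpow_natCast]
        rw [h1, h2]
        ring
    rw [hc, hh]
  rw [hvp, Wmat]
  ring
end
end
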